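/- arXiv:1304.2132 — 10 statements merged into one kernel-verified Lean document; each statement's English description precedes it below -/
import Mathlib

section
/- Let P_n be the path graph on n ≥ 2 vertices and Δ(s) = s²(D − I) − sA + I its deformed Laplacian. For every real s with |s| < 1, the matrix Δ(s) is positive definite (equivalently, the system ẋ = −Δ(s)x is asymptotically stable). -/
open Matrix Filter

/-- The degree matrix of a graph given by its adjacency matrix: the diagonal matrix of
row sums of `A`. -/
noncomputable def degMat {V : Type} [Fintype V] [DecidableEq V] (A : Matrix V V ℝ) :
    Matrix V V ℝ :=
  Matrix.diagonal fun i => ∑ j, A i j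

/-- The deformed Laplacian `Δ(s) = s²(D − I) − sA + I`. -/
noncomputable def defLap {V : Type} [Fintype V] [DecidableEq V] (A : Matrix V V ℝ) (s : ℝ) :
    Matrix V V ℝ :=
  s ^ 2 • (degMat A - 1) - s • A + 1

/-- Adjacency matrix of the path graph `P_n` on vertices `0,…,n−1`:
`i` and `j` are adjacent iff `|i − j| = 1`. -/
noncomputable def pathAdj (n : ℕ) : Matrix (Fin n) (Fin n) ℝ :=
  fun i j => if (i : ℕ) + 1 = (j : ℕ) ∨ (j : ℕ) + 1 = (i : ℕ) then 1 else 0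

/-- For the path graph `P_n` (`n ≥ 2`) and `|s| < 1`, `Δ(s)` is positive definite. -/
theorem path_defLap_posDef (n : ℕ) (hn : 2 ≤ n) (s : ℝ) (hs : |s| < 1) :
    (defLap (pathAdj n) s).PosDef := by
  classical
  have hs2 : s ^ 2 < 1 := by
    have := sq_abs s
    nlinarith [abs_nonneg s]
  have hherm : (defLap (pathAdj n) s).IsHermitian := by
    have hA : (pathAdj n).IsHermitian := by
      ext i j
      simp only [pathAdj, conjTranspose_apply, star_trivial]
      exact if_congr or_comm rfl rfl
    unfold defLap
    refine IsHermitian.add (IsHermitian.sub ?_ ?_) isHermitian_one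
    · ext i j
      simp only [conjTranspose_apply, star_trivial, Matrix.smul_apply, Matrix.sub_apply, smul_eq_mul]
      unfold degMat
      rcases eq_or_ne i j with h | h
      · subst h; rfl
      · simp [Matrix.diagonal_apply_ne _ h, Matrix.diagonal_apply_ne _ (Ne.symm h),
          Matrix.one_apply_ne h, Matrix.one_apply_ne (Ne.symm h)]
    · ext i j
      simp only [conjTranspose_apply, star_trivial, Matrix.smul_apply, smul_eq_mul]
      rw [← hA.apply i j]
      rfl
  refine Matrix.PosDef.of_dotProduct_mulVec_pos hherm ?_
  intro x hx
  -- the extension of `x` to ℕ by zero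
  set y : ℕ → ℝ := fun k => if h : k < n then x ⟨k, h⟩ else 0 with hy
  have hxy : ∀ j : Fin n, x j = y j.1 := by
    intro j; simp [hy, j.isLt]
  have hyn : ∀ m, n ≤ m → y m = 0 := by
    intro m hm; simp [hy, Nat.not_lt.mpr hm]
  -- abbreviations
  set SI : ℝ := ∑ k ∈ Finset.range n, (y k) ^ 2 with hSI
  set B : ℝ := ∑ k ∈ Finset.range (n - 1), (y k) ^ 2 with hB
  set T : ℝ := ∑ k ∈ Finset.range n, y k * y (k + 1) with hT
  -- degree computation
  have hdeg : ∀ i : Fin n, (∑ j, pathAdj n i j)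
      = (if (i : ℕ) + 1 < n then (1 : ℝ) else 0) + (if 0 < (i : ℕ) then (1 : ℝ) else 0) := by
    intro i
    have hsplit : ∀ j : Fin n, pathAdj n i j
        = (if (i : ℕ) + 1 = (j : ℕ) then (1 : ℝ) else 0)
          + (if (j : ℕ) + 1 = (i : ℕ) then (1 : ℝ) else 0) := by
      intro j
      unfold pathAdj
      by_cases h1 : (i : ℕ) + 1 = (j : ℕ) <;> by_cases h2 : (j : ℕ) + 1 = (i : ℕ) <;>
        simp [h1, h2] <;> omega
    rw [Finset.sum_congr rfl fun j _ => hsplit j, Finset.sum_add_distrib]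
    congr 1
    · rw [Fin.sum_univ_eq_sum_range (fun k => if (i : ℕ) + 1 = k then (1 : ℝ) else 0)]
      rw [Finset.sum_ite_eq]
      simp [Finset.mem_range]
    · rcases Nat.eq_zero_or_pos (i : ℕ) with h0 | h0
      · rw [Finset.sum_eq_zero]
        · simp [h0]
        · intro j _
          rw [if_neg]; omega
      · rw [if_pos h0]
        have hmem : (⟨(i : ℕ) - 1, by omega⟩ : Fin n) ∈ Finset.univ := Finset.mem_univ _
        rw [Finset.sum_eq_single_of_mem _ hmem]
        · rw [if_pos (show ((⟨(i : ℕ) - 1, by omega⟩ : Fin n) : ℕ) + 1 = (i : ℕ) by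
            simp only [Fin.val_mk]; omega)]
        · intro j _ hj
          rw [if_neg]
          intro hc
          apply hj
          apply Fin.ext
          simp only [Fin.val_mk]
          omega
  -- the quadratic form identity
  have key : x ⬝ᵥ (defLap (pathAdj n) s) *ᵥ x
      = (1 - s ^ 2) * (y 0) ^ 2 + ∑ k ∈ Finset.range (n - 1), (s * y k - y (k + 1)) ^ 2 := by
    have hQ : x ⬝ᵥ (defLap (pathAdj n) s) *ᵥ x
        = ∑ i : Fin n, ∑ j : Fin n, x i * (defLap (pathAdj n) s i j * x j) := by
      simp [dotProduct, mulVec, Finset.mul_sum]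
    have expand : ∀ i j : Fin n, x i * (defLap (pathAdj n) s i j * x j)
        = s ^ 2 * (x i * (degMat (pathAdj n) i j * x j))
          - s ^ 2 * (x i * ((1 : Matrix (Fin n) (Fin n) ℝ) i j * x j))
          - s * (x i * (pathAdj n i j * x j))
          + x i * ((1 : Matrix (Fin n) (Fin n) ℝ) i j * x j) := by
      intro i j
      simp only [defLap, Matrix.sub_apply, Matrix.add_apply, Matrix.smul_apply, smul_eq_mul]
      ring
    -- the identity sum
    have hS2 : ∑ i : Fin n, ∑ j : Fin n, x i * ((1 : Matrix (Fin n) (Fin n) ℝ) i j * x j)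
        = SI := by
      have : ∀ i : Fin n, ∑ j : Fin n, x i * ((1 : Matrix (Fin n) (Fin n) ℝ) i j * x j)
          = (y i.1) ^ 2 := by
        intro i
        simp only [Matrix.one_apply]
        rw [Finset.sum_eq_single_of_mem i (Finset.mem_univ _)]
        · simp [hxy i]; ring
        · intro j _ hj
          simp [Ne.symm hj]
      rw [Finset.sum_congr rfl fun i _ => this i, hSI,
        Fin.sum_univ_eq_sum_range (fun k => (y k) ^ 2)]
    have hS1 : ∑ i : Fin n, ∑ j : Fin n, x i * (degMat (pathAdj n) i j * x j)
        = B + (SI - (y 0) ^ 2) := by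
      have hinner : ∀ i : Fin n, ∑ j : Fin n, x i * (degMat (pathAdj n) i j * x j)
          = (if (i : ℕ) + 1 < n then (y i.1) ^ 2 else 0)
            + (if 0 < (i : ℕ) then (y i.1) ^ 2 else 0) := by
        intro i
        unfold degMat
        rw [Finset.sum_eq_single_of_mem i (Finset.mem_univ _)]
        · rw [Matrix.diagonal_apply_eq, hdeg i, hxy i]
          by_cases h1 : (i : ℕ) + 1 < n <;> by_cases h2 : 0 < (i : ℕ) <;>
            simp [h1, h2] <;> try ring
        · intro j _ hj
          simp [Matrix.diagonal_apply_ne _ (Ne.symm hj)]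
      rw [Finset.sum_congr rfl fun i _ => hinner i, Finset.sum_add_distrib]
      congr 1
      · rw [Fin.sum_univ_eq_sum_range (fun k => if k + 1 < n then (y k) ^ 2 else 0)]
        rw [← Finset.sum_filter]
        rw [hB]
        congr 1
        ext k
        simp [Finset.mem_range, Finset.mem_filter]
        omega
      · rw [Fin.sum_univ_eq_sum_range (fun k => if 0 < k then (y k) ^ 2 else 0)]
        have hptw : ∀ k, (if 0 < k then (y k) ^ 2 else 0)
            = (y k) ^ 2 - (if k = 0 then (y k) ^ 2 else 0) := by
          intro k
          rcases Nat.eq_zero_or_pos k with h | h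
          · simp [h]
          · simp [h, Nat.pos_iff_ne_zero.mp h]
        rw [Finset.sum_congr rfl fun k _ => hptw k, Finset.sum_sub_distrib,
          Finset.sum_ite_eq' (Finset.range n) 0 (fun k => (y k) ^ 2)]
        rw [if_pos (Finset.mem_range.mpr (by omega))]
    have hS3 : ∑ i : Fin n, ∑ j : Fin n, x i * (pathAdj n i j * x j) = 2 * T := by
      have hsplit : ∀ i j : Fin n, x i * (pathAdj n i j * x j)
          = (if (i : ℕ) + 1 = (j : ℕ) then x i * x j else 0)
            + (if (j : ℕ) + 1 = (i : ℕ) then x i * x j else 0) := by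
        intro i j
        unfold pathAdj
        by_cases h1 : (i : ℕ) + 1 = (j : ℕ)
        · have h2 : ¬((j : ℕ) + 1 = (i : ℕ)) := by omega
          simp [h1, h2]
        · by_cases h2 : (j : ℕ) + 1 = (i : ℕ) <;> simp [h1, h2]
      have part1 : ∀ i : Fin n,
          (∑ j : Fin n, if (i : ℕ) + 1 = (j : ℕ) then x i * x j else 0)
          = y i.1 * y (i.1 + 1) := by
        intro i
        have : ∀ j : Fin n, (if (i : ℕ) + 1 = (j : ℕ) then x i * x j else 0)
            = (fun k => if (i : ℕ) + 1 = k then y i.1 * y k else 0) j.1 := by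
          intro j
          by_cases h : (i : ℕ) + 1 = (j : ℕ)
          · simp only [h, if_pos rfl, if_pos]
            rw [hxy i, hxy j]
          · simp [h]
        rw [Finset.sum_congr rfl fun j _ => this j,
          Fin.sum_univ_eq_sum_range (fun k => if (i : ℕ) + 1 = k then y i.1 * y k else 0),
          Finset.sum_ite_eq]
        by_cases h : (i : ℕ) + 1 ∈ Finset.range n
        · rw [if_pos h]
        · rw [if_neg h, hyn ((i : ℕ) + 1) (by simpa [Finset.mem_range, Nat.not_lt] using h)]
          ring
      calc ∑ i : Fin n, ∑ j : Fin n, x i * (pathAdj n i j * x j)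
          = ∑ i : Fin n, ∑ j : Fin n,
            ((if (i : ℕ) + 1 = (j : ℕ) then x i * x j else 0)
              + (if (j : ℕ) + 1 = (i : ℕ) then x i * x j else 0)) := by
            exact Finset.sum_congr rfl fun i _ =>
              Finset.sum_congr rfl fun j _ => hsplit i j
        _ = (∑ i : Fin n, ∑ j : Fin n, if (i : ℕ) + 1 = (j : ℕ) then x i * x j else 0)
            + ∑ i : Fin n, ∑ j : Fin n, (if (j : ℕ) + 1 = (i : ℕ) then x i * x j else 0) := by
            rw [← Finset.sum_add_distrib]
            exact Finset.sum_congr rfl fun i _ => Finset.sum_add_distrib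
        _ = T + T := by
            congr 1
            · rw [Finset.sum_congr rfl fun i _ => part1 i, hT,
                Fin.sum_univ_eq_sum_range (fun k => y k * y (k + 1))]
            · rw [Finset.sum_comm]
              have : ∀ j : Fin n,
                  (∑ i : Fin n, if (j : ℕ) + 1 = (i : ℕ) then x i * x j else 0)
                  = y j.1 * y (j.1 + 1) := by
                intro j
                rw [← part1 j]
                exact Finset.sum_congr rfl fun i _ => by
                  by_cases h : (j : ℕ) + 1 = (i : ℕ) <;> simp [h, mul_comm]
              rw [Finset.sum_congr rfl fun j _ => this j, hT,
                Fin.sum_univ_eq_sum_range (fun k => y k * y (k + 1))]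
        _ = 2 * T := by ring
    -- RHS expansion
    have hrhs : ∑ k ∈ Finset.range (n - 1), (s * y k - y (k + 1)) ^ 2
        = s ^ 2 * B - 2 * s * T + (SI - (y 0) ^ 2) := by
      have hexp : ∀ k, (s * y k - y (k + 1)) ^ 2
          = s ^ 2 * (y k) ^ 2 - 2 * s * (y k * y (k + 1)) + (y (k + 1)) ^ 2 := by
        intro k; ring
      rw [Finset.sum_congr rfl fun k _ => hexp k, Finset.sum_add_distrib,
        Finset.sum_sub_distrib, ← Finset.mul_sum, ← Finset.mul_sum]
      have hn1 : n - 1 + 1 = n := by omega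
      have hTT : T = ∑ k ∈ Finset.range (n - 1), y k * y (k + 1) := by
        rw [hT, ← hn1, Finset.sum_range_succ, hn1, hyn n (le_refl n)]
        ring
      have hCC : (∑ k ∈ Finset.range (n - 1), (y (k + 1)) ^ 2) = SI - (y 0) ^ 2 := by
        have := Finset.sum_range_succ' (fun k => (y k) ^ 2) (n - 1)
        rw [hn1] at this
        rw [hSI, this]
        ring
      rw [hCC, ← hTT, hB]
    have conv1 : ∀ (M : Matrix (Fin n) (Fin n) ℝ),
        (∑ i : Fin n, x i * ∑ j : Fin n, M i j * x j)
          = ∑ i : Fin n, ∑ j : Fin n, x i * (M i j * x j) :=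
      fun M => Finset.sum_congr rfl fun i _ => Finset.mul_sum _ _ _
    rw [hQ, Finset.sum_congr rfl fun i _ => Finset.sum_congr rfl fun j _ => expand i j]
    simp only [Finset.sum_add_distrib, Finset.sum_sub_distrib, ← Finset.mul_sum]
    rw [conv1 (degMat (pathAdj n)), conv1 1, conv1 (pathAdj n), hS1, hS2, hS3, hrhs]
    ring
  have hstar : star x = x := by ext i; simp
  rw [hstar, key]
  -- positivity
  have h1 : 0 ≤ (1 - s ^ 2) * (y 0) ^ 2 := mul_nonneg (by linarith) (sq_nonneg _)
  have hnn : ∀ k ∈ Finset.range (n - 1), (0 : ℝ) ≤ (s * y k - y (k + 1)) ^ 2 :=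
    fun k _ => sq_nonneg _
  have h2 : 0 ≤ ∑ k ∈ Finset.range (n - 1), (s * y k - y (k + 1)) ^ 2 :=
    Finset.sum_nonneg hnn
  rcases lt_or_eq_of_le (add_nonneg h1 h2) with h | h
  · exact h
  exfalso
  have hz1 : (1 - s ^ 2) * (y 0) ^ 2 = 0 := by
    have := Finset.sum_nonneg hnn
    nlinarith
  have hz2 : ∑ k ∈ Finset.range (n - 1), (s * y k - y (k + 1)) ^ 2 = 0 := by linarith
  have hy00 : y 0 = 0 := by
    have := mul_eq_zero.mp hz1
    rcases this with h' | h'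
    · linarith
    · exact pow_eq_zero_iff (by norm_num) |>.mp h'
  have hrec : ∀ k ∈ Finset.range (n - 1), (s * y k - y (k + 1)) ^ 2 = 0 :=
    (Finset.sum_eq_zero_iff_of_nonneg hnn).mp hz2
  have hall : ∀ k, y k = 0 := by
    intro k
    induction k with
    | zero => exact hy00
    | succ k ih =>
      by_cases hk : k < n - 1
      · have := hrec k (Finset.mem_range.mpr hk)
        have h' : s * y k - y (k + 1) = 0 := by
          exact pow_eq_zero_iff (by norm_num) |>.mp this
        rw [ih] at h'
        linarith
      · exact hyn (k + 1) (by omega)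
  apply hx
  funext i
  rw [hxy i, hall]
  rfl
end

section
/- Let P_n be the path graph on n ≥ 2 vertices and Δ(s) = s²(D − I) − sA + I its deformed Laplacian. For every real s with |s| > 1, the matrix Δ(s) has a negative eigenvalue, i.e., there exists a vector v with vᵀΔ(s)v < 0 (equivalently, the system ẋ = −Δ(s)x is unstable). -/
open Matrix Filter

lemma sum_ite_succ (n : ℕ) (i : Fin n) (g : Fin n → ℝ) :
    ∑ j : Fin n, (if (i:ℕ)+1 = (j:ℕ) then g j else 0)
      = if h : (i:ℕ)+1 < n then g ⟨(i:ℕ)+1, h⟩ else 0 := by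
  split_ifs with h
  · rw [Finset.sum_eq_single (⟨(i:ℕ)+1, h⟩ : Fin n)]
    · simp
    · intro b _ hb
      rw [if_neg]
      intro hc
      exact hb (Fin.ext hc.symm)
    · simp
  · apply Finset.sum_eq_zero
    intro j _
    rw [if_neg]
    intro hc
    exact h (hc ▸ j.isLt)

lemma sum_ite_pred (n : ℕ) (i : Fin n) (g : Fin n → ℝ) :
    ∑ j : Fin n, (if (j:ℕ)+1 = (i:ℕ) then g j else 0)
      = if h : 0 < (i:ℕ) then g ⟨(i:ℕ)-1, by omega⟩ else 0 := by
  split_ifs with h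
  · rw [Finset.sum_eq_single (⟨(i:ℕ)-1, by omega⟩ : Fin n)]
    · simp only [Fin.val_mk]; rw [if_pos (by omega)]
    · intro b _ hb
      rw [if_neg]
      intro hc
      exact hb (Fin.ext (by simp only [Fin.val_mk]; omega))
    · simp
  · apply Finset.sum_eq_zero
    intro j _
    rw [if_neg]
    omega

lemma pathAdj_row_sum (n : ℕ) (i : Fin n) (f : Fin n → ℝ) :
    ∑ j, pathAdj n i j * f j =
      (if h : (i:ℕ)+1 < n then f ⟨(i:ℕ)+1, h⟩ else 0) +
      (if h : 0 < (i:ℕ) then f ⟨(i:ℕ)-1, by omega⟩ else 0) := by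
  rw [← sum_ite_succ n i f, ← sum_ite_pred n i f, ← Finset.sum_add_distrib]
  apply Finset.sum_congr rfl
  intro j _
  unfold pathAdj
  by_cases h1 : (i:ℕ)+1 = (j:ℕ) <;> by_cases h2 : (j:ℕ)+1 = (i:ℕ)
  · omega
  · simp [h1, h2]
  · simp [h1, h2]
  · simp [h1, h2]

/-- For the path graph `P_n` (`n ≥ 2`) and `|s| > 1`, `Δ(s)` has a negative eigenvalue,
i.e. there is a vector `v` with `vᵀ Δ(s) v < 0`. -/
theorem path_defLap_unstable (n : ℕ) (hn : 2 ≤ n) (s : ℝ) (hs : 1 < |s|) :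
    ∃ v : Fin n → ℝ, v ⬝ᵥ (defLap (pathAdj n) s *ᵥ v) < 0 := by
  have hs0 : s ≠ 0 := by
    intro h; rw [h, abs_zero] at hs; linarith
  have hs2 : 1 < s ^ 2 := by nlinarith [sq_abs s, abs_nonneg s]
  set x : ℝ := s⁻¹ with hx
  have hx0 : x ≠ 0 := inv_ne_zero hs0
  set v : Fin n → ℝ := fun i => x ^ (i : ℕ) with hv
  refine ⟨v, ?_⟩
  have key : ∀ i : Fin n, (defLap (pathAdj n) s *ᵥ v) i
      = if (i:ℕ) = n - 1 then (1 - s^2) * x^(n-1) else 0 := by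
    intro i
    have hmv : (defLap (pathAdj n) s *ᵥ v) i
        = s^2 * ((∑ j, pathAdj n i j) * v i - v i)
          - s * (∑ j, pathAdj n i j * v j) + v i := by
      simp only [defLap, add_mulVec, sub_mulVec, smul_mulVec, one_mulVec,
        Pi.add_apply, Pi.sub_apply, Pi.smul_apply, smul_eq_mul, degMat,
        mulVec_diagonal]
      rfl
    have hdeg : (∑ j, pathAdj n i j)
        = (if _ : (i:ℕ)+1 < n then (1:ℝ) else 0)
          + (if _ : 0 < (i:ℕ) then (1:ℝ) else 0) := by
      have h := pathAdj_row_sum n i (fun _ => (1:ℝ))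
      simp only [mul_one] at h
      exact h
    rw [hmv, hdeg, pathAdj_row_sum n i v]
    by_cases h0 : (i:ℕ) = 0
    · have hA : (i:ℕ) + 1 < n := by omega
      have hB : ¬ (0 < (i:ℕ)) := by omega
      rw [dif_pos hA, dif_pos hA, dif_neg hB, dif_neg hB, if_neg (by omega)]
      simp only [hv, Fin.val_mk, h0]
      rw [hx]
      field_simp
      linear_combination (-1 : ℝ) * (mul_inv_cancel₀ hs0)
    · by_cases h1 : (i:ℕ) = n - 1
      · have hA : ¬ ((i:ℕ) + 1 < n) := by omega
        have hB : 0 < (i:ℕ) := by omega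
        rw [dif_neg hA, dif_neg hA, dif_pos hB, dif_pos hB, if_pos h1]
        obtain ⟨m, rfl⟩ : ∃ m, n = m + 2 := ⟨n - 2, by omega⟩
        have hi : (i:ℕ) = m + 1 := by omega
        simp only [hv, Fin.val_mk, hi]
        have e1 : m + 1 - 1 = m := by omega
        have e2 : m + 2 - 1 = m + 1 := by omega
        rw [e1, e2, hx]
        field_simp
        linear_combination (s * s⁻¹ ^ m) * (mul_inv_cancel₀ hs0)
      · obtain ⟨k, hk⟩ : ∃ k, (i:ℕ) = k + 1 := ⟨(i:ℕ) - 1, by omega⟩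
        have hA : (i:ℕ) + 1 < n := by omega
        have hB : 0 < (i:ℕ) := by omega
        rw [dif_pos hA, dif_pos hA, dif_pos hB, dif_pos hB, if_neg h1]
        simp only [hv, Fin.val_mk, hk]
        have e1 : k + 1 - 1 = k := by omega
        rw [e1, hx]
        field_simp
        linear_combination (s * s⁻¹ ^ k - s⁻¹ * s⁻¹ ^ k) * (mul_inv_cancel₀ hs0)
  have hform : v ⬝ᵥ (defLap (pathAdj n) s *ᵥ v)
      = (1 - s^2) * (x^(n-1) * x^(n-1)) := by
    unfold dotProduct
    rw [Finset.sum_congr rfl (fun i _ => by rw [key i])]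
    rw [Finset.sum_eq_single (⟨n - 1, by omega⟩ : Fin n)]
    · simp only [Fin.val_mk, hv, if_true]
      ring
    · intro b _ hb
      rw [if_neg, mul_zero]
      intro hc
      exact hb (Fin.ext (by simp only [Fin.val_mk]; omega))
    · simp
  rw [hform]
  have hpow : x ^ (n-1) ≠ 0 := pow_ne_zero _ hx0
  have hpos : 0 < x ^ (n-1) * x ^ (n-1) := mul_self_pos.mpr hpow
  nlinarith
end

section
/- Let P_n be the path graph on n ≥ 2 vertices and Δ(s) = s²(D − I) − sA + I its deformed Laplacian. Then for every real s, det(Δ(s)) = 1 − s². -/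
open Matrix Filter

noncomputable def Lm (n : ℕ) (s : ℝ) : Matrix (Fin n) (Fin n) ℝ :=
  fun i j => if i = j then 1 else if (j : ℕ) + 1 = (i : ℕ) then -s else 0

noncomputable def Um (n : ℕ) (s : ℝ) : Matrix (Fin n) (Fin n) ℝ :=
  fun i j => if i = j then (if (i : ℕ) + 1 = n then 1 - s ^ 2 else 1)
    else if (i : ℕ) + 1 = (j : ℕ) then -s else 0

lemma sum_ite_val {n : ℕ} (m : ℕ) (hm : m < n) (f : Fin n → ℝ) :
    ∑ j : Fin n, (if m = (j : ℕ) then f j else 0) = f ⟨m, hm⟩ := by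
  rw [Finset.sum_eq_single (⟨m, hm⟩ : Fin n)]
  · simp
  · intro b _ hb
    rw [if_neg]
    intro hc
    exact hb (Fin.ext hc.symm)
  · simp

lemma sum_ite_val_zero {n : ℕ} (m : ℕ) (hm : ¬ m < n) (f : Fin n → ℝ) :
    ∑ j : Fin n, (if m = (j : ℕ) then f j else 0) = 0 := by
  apply Finset.sum_eq_zero
  intro j _
  rw [if_neg]
  intro hc
  exact hm (hc ▸ j.isLt)

lemma rowsum (n : ℕ) (i : Fin n) :
    ∑ j, pathAdj n i j =
      (if (i : ℕ) + 1 < n then (1:ℝ) else 0) + (if 0 < (i : ℕ) then 1 else 0) := by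
  have h1 : ∀ j : Fin n, pathAdj n i j =
      (if (i : ℕ) + 1 = (j : ℕ) then (1:ℝ) else 0)
      + (if (j : ℕ) + 1 = (i : ℕ) then (1:ℝ) else 0) := by
    intro j
    unfold pathAdj
    split_ifs <;> first | ring1 | (exfalso; omega)
  simp only [h1, Finset.sum_add_distrib]
  congr 1
  · by_cases h : (i : ℕ) + 1 < n
    · rw [if_pos h, sum_ite_val _ h]
    · rw [if_neg h, sum_ite_val_zero _ h]
  · rcases Nat.eq_zero_or_pos (i : ℕ) with h | h
    · rw [if_neg (by omega), Finset.sum_eq_zero]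
      intro j _
      rw [if_neg (by omega)]
    · rw [if_pos h]
      have hlt : (i : ℕ) - 1 < n := by omega
      have h2 : ∀ j : Fin n, (if (j : ℕ) + 1 = (i : ℕ) then (1:ℝ) else 0)
          = (if (i : ℕ) - 1 = (j : ℕ) then 1 else 0) := by
        intro j; split_ifs <;> first | rfl | omega
      simp only [h2]
      rw [sum_ite_val _ hlt]

lemma factor (n : ℕ) (s : ℝ) : defLap (pathAdj n) s = Lm n s * Um n s := by
  ext i j
  have hmul : (Lm n s * Um n s) i j =
      Um n s i j + (if h : 0 < (i : ℕ) then -s * Um n s ⟨(i : ℕ) - 1, by omega⟩ j else 0) := by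
    rw [Matrix.mul_apply]
    have h1 : ∀ k : Fin n, Lm n s i k * Um n s k j =
        (if (i : ℕ) = (k : ℕ) then Um n s k j else 0)
        + (if (i : ℕ) - 1 = (k : ℕ) ∧ 0 < (i : ℕ) then -s * Um n s k j else 0) := by
      intro k
      unfold Lm
      simp only [Fin.ext_iff]
      split_ifs <;> first | ring1 | (exfalso; omega)
    simp only [h1, Finset.sum_add_distrib]
    congr 1
    · exact sum_ite_val _ i.isLt _
    · by_cases h : 0 < (i : ℕ)
      · rw [dif_pos h]
        have h2 : ∀ k : Fin n, (if (i : ℕ) - 1 = (k : ℕ) ∧ 0 < (i : ℕ) then -s * Um n s k j else 0)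
            = (if (i : ℕ) - 1 = (k : ℕ) then -s * Um n s k j else 0) := by
          intro k; split_ifs <;> first | rfl | (exfalso; omega)
        simp only [h2]
        exact sum_ite_val _ (by omega) _
      · rw [dif_neg h, Finset.sum_eq_zero]
        intro k _
        rw [if_neg (by omega)]
  rw [hmul]
  simp only [defLap, degMat, Matrix.add_apply, Matrix.sub_apply, Matrix.smul_apply,
    Matrix.one_apply, Matrix.diagonal_apply, smul_eq_mul]
  rw [rowsum]
  simp only [pathAdj, Um, Fin.ext_iff]
  have hi := i.isLt
  have hj := j.isLt
  by_cases h : 0 < (i : ℕ)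
  · rw [dif_pos h]
    split_ifs <;> first | ring1 | (exfalso; omega)
  · rw [dif_neg h]
    split_ifs <;> first | ring1 | (exfalso; omega)

/-- For the path graph `P_n` (`n ≥ 2`), `det Δ(s) = 1 − s²`. -/
theorem path_defLap_det (n : ℕ) (hn : 2 ≤ n) (s : ℝ) :
    (defLap (pathAdj n) s).det = 1 - s ^ 2 := by
  rw [factor, Matrix.det_mul]
  have hL : (Lm n s).det = 1 := by
    rw [Matrix.det_of_lowerTriangular (Lm n s) (by
      intro i j hij
      have h2 : i < j := hij
      have h3 : (i : ℕ) < (j : ℕ) := h2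
      unfold Lm
      rw [if_neg (Fin.ne_of_lt h2), if_neg (by omega)])]
    simp [Lm]
  have hU : (Um n s).det = 1 - s ^ 2 := by
    rw [Matrix.det_of_upperTriangular (M := Um n s) (by
      intro i j hij
      have h2 : j < i := hij
      have h3 : (j : ℕ) < (i : ℕ) := h2
      unfold Um
      rw [if_neg (Fin.ne_of_lt h2).symm, if_neg (by omega)])]
    have key : ∀ b : Fin n, Um n s b b = if (b : ℕ) + 1 = n then 1 - s ^ 2 else 1 := by
      intro b
      unfold Um
      rw [if_pos rfl]
    have hlt : n - 1 < n := by omega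
    rw [Finset.prod_eq_single (⟨n - 1, hlt⟩ : Fin n)]
    · have hcond : ((⟨n - 1, hlt⟩ : Fin n) : ℕ) + 1 = n := by
        simp only [Fin.val_mk]
        omega
      rw [key, if_pos hcond]
    · intro b _ hb
      have hb' : (b : ℕ) ≠ n - 1 := by
        intro hc
        apply hb
        apply Fin.ext
        simp only [Fin.val_mk]
        exact hc
      have hbn := b.isLt
      rw [key, if_neg (by omega)]
    · simp
  rw [hL, hU, one_mul]
end

section
/- Let P_n be the path graph on n ≥ 2 vertices, let Q = Δ(−1) = D + A be its signless Laplacian, and let k ∈ ℝⁿ be the alternating vector k_i = (−1)^i for i ∈ {0,…,n−1}. Then for every initial vector x₀ ∈ ℝⁿ, the matrix-exponential solution exp(−tQ)·x₀ of ẋ = −Qx converges, as t → ∞, to (1/n)·(kᵀx₀)·k. In particular the states split into two groups converging to the two values ±(1/n)kᵀx₀. -/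
open Matrix Filter

lemma sum_if_val_eq (n m : ℕ) (g : Fin n → ℝ) :
    (∑ j : Fin n, if (j : ℕ) = m then g j else 0) = if h : m < n then g ⟨m, h⟩ else 0 := by
  split_ifs with h
  · rw [Finset.sum_eq_single ⟨m, h⟩]
    · simp
    · intro j _ hj
      rw [if_neg]
      intro hv; exact hj (Fin.ext hv)
    · simp
  · apply Finset.sum_eq_zero
    intro j _
    rw [if_neg]
    omega

lemma pathAdj_mulVec (n : ℕ) (v : Fin n → ℝ) (i : Fin n) :
    (pathAdj n *ᵥ v) i =
      (if h : (i : ℕ) + 1 < n then v ⟨(i : ℕ) + 1, h⟩ else 0) +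
      (if h : 1 ≤ (i : ℕ) then v ⟨(i : ℕ) - 1, lt_of_le_of_lt (Nat.sub_le _ _) i.isLt⟩ else 0) := by
  have hsplit : ∀ j : Fin n, pathAdj n i j * v j =
      (if (j : ℕ) = (i : ℕ) + 1 then v j else 0) +
      (if 1 ≤ (i : ℕ) ∧ (j : ℕ) = (i : ℕ) - 1 then v j else 0) := by
    intro j
    by_cases h2 : (j : ℕ) = (i : ℕ) + 1
    · have hA : pathAdj n i j = 1 := by unfold pathAdj; rw [if_pos]; left; omega
      have hne : ¬(1 ≤ (i : ℕ) ∧ (j : ℕ) = (i : ℕ) - 1) := by omega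
      rw [hA, if_pos h2, if_neg hne, one_mul, add_zero]
    · by_cases h3 : 1 ≤ (i : ℕ) ∧ (j : ℕ) = (i : ℕ) - 1
      · have hA : pathAdj n i j = 1 := by unfold pathAdj; rw [if_pos]; right; omega
        rw [hA, if_neg h2, if_pos h3, one_mul, zero_add]
      · have hA : pathAdj n i j = 0 := by unfold pathAdj; rw [if_neg]; omega
        rw [hA, if_neg h2, if_neg h3, zero_mul, add_zero]
  rw [mulVec, dotProduct]
  simp only [hsplit]
  have h2sum : (∑ j : Fin n, if 1 ≤ (i : ℕ) ∧ (j : ℕ) = (i : ℕ) - 1 then v j else 0)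
      = (if h : 1 ≤ (i : ℕ) then v ⟨(i : ℕ) - 1, lt_of_le_of_lt (Nat.sub_le _ _) i.isLt⟩
         else 0) := by
    by_cases hi : 1 ≤ (i : ℕ)
    · rw [dif_pos hi]
      have he : ∀ j : Fin n, (if 1 ≤ (i : ℕ) ∧ (j : ℕ) = (i : ℕ) - 1 then v j else 0)
          = (if (j : ℕ) = (i : ℕ) - 1 then v j else 0) := by
        intro j; simp [hi]
      simp only [he]
      rw [sum_if_val_eq]
      rw [dif_pos (lt_of_le_of_lt (Nat.sub_le _ _) i.isLt)]
    · rw [dif_neg hi]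
      apply Finset.sum_eq_zero
      intro j _
      rw [if_neg]
      tauto
  rw [Finset.sum_add_distrib, sum_if_val_eq, h2sum]

lemma deg_path (n : ℕ) (i : Fin n) :
    (∑ j, pathAdj n i j) =
      (if (i : ℕ) + 1 < n then (1:ℝ) else 0) + (if 1 ≤ (i : ℕ) then (1:ℝ) else 0) := by
  have := pathAdj_mulVec n (fun _ => 1) i
  simp only [mulVec, dotProduct, mul_one] at this
  rw [this]
  congr 1

lemma defLap_neg_one {V : Type} [Fintype V] [DecidableEq V] (A : Matrix V V ℝ) :
    defLap A (-1) = degMat A + A := by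
  unfold defLap
  norm_num
  abel

lemma Q_mulVec (n : ℕ) (v : Fin n → ℝ) (i : Fin n) :
    (defLap (pathAdj n) (-1) *ᵥ v) i =
      ((if (i : ℕ) + 1 < n then (1:ℝ) else 0) + (if 1 ≤ (i : ℕ) then (1:ℝ) else 0)) * v i +
      ((if h : (i : ℕ) + 1 < n then v ⟨(i : ℕ) + 1, h⟩ else 0) +
       (if h : 1 ≤ (i : ℕ) then v ⟨(i : ℕ) - 1, by omega⟩ else 0)) := by
  rw [defLap_neg_one, add_mulVec, ← pathAdj_mulVec]
  simp only [Pi.add_apply, degMat, mulVec_diagonal, deg_path]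

/-- The alternating vector. -/
noncomputable def altV (n : ℕ) : Fin n → ℝ := fun i => (-1 : ℝ) ^ (i : ℕ)

lemma Q_mulVec_alt (n : ℕ) (hn : 2 ≤ n) :
    defLap (pathAdj n) (-1) *ᵥ altV n = 0 := by
  funext i
  rw [Q_mulVec]
  simp only [altV, Pi.zero_apply]
  by_cases h1 : (i : ℕ) + 1 < n <;> by_cases h2 : 1 ≤ (i : ℕ)
  · obtain ⟨m, hm⟩ : ∃ m, (i : ℕ) = m + 1 := ⟨(i : ℕ) - 1, by omega⟩
    rw [dif_pos h1, dif_pos h2, if_pos h1, if_pos h2]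
    simp only [hm, Nat.add_sub_cancel]
    ring
  · have hi0 : (i : ℕ) = 0 := by omega
    rw [dif_pos h1, dif_neg h2, if_pos h1, if_neg h2]
    simp [hi0]
  · rw [dif_neg h1, dif_pos h2, if_neg h1, if_pos h2]
    obtain ⟨m, hm⟩ : ∃ m, (i : ℕ) = m + 1 := ⟨(i : ℕ) - 1, by omega⟩
    simp only [hm]
    have hsub : m + 1 - 1 = m := by omega
    rw [hsub]
    ring
  · omega

lemma Q_kernel (n : ℕ) (hn : 2 ≤ n) (v : Fin n → ℝ)
    (hv : defLap (pathAdj n) (-1) *ᵥ v = 0) :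
    ∃ c : ℝ, v = c • altV n := by
  have heq : ∀ i : Fin n,
      ((if (i : ℕ) + 1 < n then (1:ℝ) else 0) + (if 1 ≤ (i : ℕ) then (1:ℝ) else 0)) * v i +
      ((if h : (i : ℕ) + 1 < n then v ⟨(i : ℕ) + 1, h⟩ else 0) +
       (if h : 1 ≤ (i : ℕ) then v ⟨(i : ℕ) - 1, lt_of_le_of_lt (Nat.sub_le _ _) i.isLt⟩ else 0))
      = 0 := by
    intro i
    rw [← Q_mulVec, hv]
    rfl
  have h0 : (0 : ℕ) < n := by omega
  have key : ∀ m : ℕ, ∀ h : m < n, v ⟨m, h⟩ = (-1) ^ m * v ⟨0, h0⟩ := by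
    intro m
    induction m using Nat.strong_induction_on with
    | _ m ih =>
      match m with
      | 0 => intro h; simp
      | 1 =>
        intro h
        have := heq ⟨0, h0⟩
        rw [if_pos (by simpa using h), dif_pos (by simpa using h)] at this
        simp only [Fin.val_mk] at this
        rw [if_neg (by simp), dif_neg (by simp)] at this
        simp only [zero_add, add_zero] at this
        have : v ⟨1, h⟩ = -v ⟨0, h0⟩ := by linarith
        rw [this]; ring
      | (p+2) =>
        intro h
        have hp1 : p + 1 < n := by omega
        have hp : p < n := by omega
        have := heq ⟨p+1, hp1⟩
        simp only [Fin.val_mk] at this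
        rw [if_pos (by omega), if_pos (by omega), dif_pos (by omega : p+1+1 < n),
          dif_pos (by omega : 1 ≤ p+1)] at this
        simp only [Nat.add_sub_cancel] at this
        have e1 : v ⟨p+1, by omega⟩ = (-1)^(p+1) * v ⟨0, h0⟩ := ih (p+1) (by omega) _
        have e2 : v ⟨p, by omega⟩ = (-1)^p * v ⟨0, h0⟩ := ih p (by omega) _
        have e3 : v ⟨p+1+1, by omega⟩ = v ⟨p+2, h⟩ := by congr 1
        rw [e3, e1, e2] at this
        have : v ⟨p+2, h⟩ = -((1+1) * ((-1)^(p+1) * v ⟨0,h0⟩)) - (-1)^p * v ⟨0,h0⟩ := by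
          linarith
        rw [this]
        ring
  refine ⟨v ⟨0, h0⟩, ?_⟩
  funext i
  have : v i = v ⟨(i : ℕ), i.isLt⟩ := by congr 1
  rw [this, key (i : ℕ) i.isLt]
  simp only [Pi.smul_apply, altV, smul_eq_mul]
  ring

lemma sum_shift (n : ℕ) (F : ℕ → ℝ) :
    (∑ i : Fin n, if 1 ≤ (i : ℕ) then F ((i : ℕ) - 1) else 0)
      = ∑ i : Fin n, if (i : ℕ) + 1 < n then F (i : ℕ) else 0 := by
  rw [Fin.sum_univ_eq_sum_range (fun m => if 1 ≤ m then F (m - 1) else 0),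
    Fin.sum_univ_eq_sum_range (fun m => if m + 1 < n then F m else 0)]
  cases n with
  | zero => simp
  | succ N =>
    rw [Finset.sum_range_succ' (fun m => if 1 ≤ m then F (m - 1) else 0),
      Finset.sum_range_succ (fun m => if m + 1 < N + 1 then F m else 0)]
    have h0 : (if 1 ≤ 0 then F (0 - 1) else (0:ℝ)) = 0 := by rw [if_neg (by omega)]
    have hN : (if N + 1 < N + 1 then F N else (0:ℝ)) = 0 := by rw [if_neg (by omega)]
    rw [h0, hN, add_zero, add_zero]
    apply Finset.sum_congr rfl
    intro m hm
    have hm' := Finset.mem_range.mp hm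
    rw [if_pos (by omega), if_pos (by omega)]
    simp

lemma Q_isHermitian (n : ℕ) : (defLap (pathAdj n) (-1)).IsHermitian := by
  rw [defLap_neg_one]
  apply Matrix.IsHermitian.add
  · exact Matrix.isHermitian_diagonal _
  · show (pathAdj n)ᴴ = pathAdj n
    ext i j
    simp only [conjTranspose_apply, pathAdj, star_trivial]
    simp only [or_comm]

lemma Q_posSemidef (n : ℕ) : (defLap (pathAdj n) (-1)).PosSemidef := by
  refine Matrix.PosSemidef.of_dotProduct_mulVec_nonneg (Q_isHermitian n) (fun x => ?_)
  set y : ℕ → ℝ := fun m => if h : m < n then x ⟨m, h⟩ else 0 with hy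
  have hdrop : ∀ m : ℕ, ¬ (m + 1 < n) → y (m + 1) = 0 := by
    intro m hm
    simp only [hy]
    exact dif_neg hm
  have hpoint : ∀ i : Fin n, star x i * (defLap (pathAdj n) (-1) *ᵥ x) i =
      (if (i : ℕ) + 1 < n then (y (i : ℕ))^2 else 0) +
      (if 1 ≤ (i : ℕ) then (y (i : ℕ))^2 else 0) +
      y (i : ℕ) * y ((i : ℕ) + 1) +
      (if 1 ≤ (i : ℕ) then y ((i : ℕ) - 1) * y (i : ℕ) else 0) := by
    intro i
    rw [Q_mulVec]
    have hxi : x i = y (i : ℕ) := by simp only [hy]; rw [dif_pos i.isLt]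
    have hnext : (if h : (i : ℕ) + 1 < n then x ⟨(i : ℕ) + 1, h⟩ else 0) = y ((i : ℕ) + 1) := rfl
    have hstar : star x i = x i := rfl
    rw [hstar, hnext]
    by_cases h1 : (i : ℕ) + 1 < n <;> by_cases h2 : 1 ≤ (i : ℕ) <;>
      simp only [if_pos, if_neg, dif_pos, dif_neg, h1, h2, if_true, if_false, dite_true,
        dite_false]
    · have hprev : x ⟨(i : ℕ) - 1, lt_of_le_of_lt (Nat.sub_le _ _) i.isLt⟩ = y ((i : ℕ) - 1) := by
        simp only [hy]; rw [dif_pos (lt_of_le_of_lt (Nat.sub_le _ _) i.isLt)]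
      rw [hprev, hxi]; ring
    · rw [hxi]; ring
    · have hprev : x ⟨(i : ℕ) - 1, lt_of_le_of_lt (Nat.sub_le _ _) i.isLt⟩ = y ((i : ℕ) - 1) := by
        simp only [hy]; rw [dif_pos (lt_of_le_of_lt (Nat.sub_le _ _) i.isLt)]
      rw [hprev, hxi]; ring
    · rw [hxi]; ring
  rw [dotProduct]
  simp only [hpoint]
  have hA2 : (∑ i : Fin n, if 1 ≤ (i : ℕ) then (y (i : ℕ))^2 else 0)
      = ∑ i : Fin n, (y ((i : ℕ) + 1))^2 := by
    have h1 : (∑ i : Fin n, if 1 ≤ (i : ℕ) then (y (i : ℕ))^2 else 0)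
        = ∑ i : Fin n, if 1 ≤ (i : ℕ) then (y (((i : ℕ) - 1) + 1))^2 else 0 := by
      apply Finset.sum_congr rfl; intro i _
      by_cases h : 1 ≤ (i : ℕ)
      · rw [if_pos h, if_pos h]; congr 2; omega
      · rw [if_neg h, if_neg h]
    rw [h1, sum_shift n (fun t => (y (t + 1))^2)]
    apply Finset.sum_congr rfl; intro i _
    by_cases h : (i : ℕ) + 1 < n
    · rw [if_pos h]
    · rw [if_neg h, hdrop _ h]; ring
  have hA4 : (∑ i : Fin n, if 1 ≤ (i : ℕ) then y ((i : ℕ) - 1) * y (i : ℕ) else 0)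
      = ∑ i : Fin n, y (i : ℕ) * y ((i : ℕ) + 1) := by
    have h1 : (∑ i : Fin n, if 1 ≤ (i : ℕ) then y ((i : ℕ) - 1) * y (i : ℕ) else 0)
        = ∑ i : Fin n, if 1 ≤ (i : ℕ) then y ((i : ℕ) - 1) * y (((i : ℕ) - 1) + 1) else 0 := by
      apply Finset.sum_congr rfl; intro i _
      by_cases h : 1 ≤ (i : ℕ)
      · rw [if_pos h, if_pos h]; congr 2; omega
      · rw [if_neg h, if_neg h]
    rw [h1, sum_shift n (fun t => y t * y (t + 1))]
    apply Finset.sum_congr rfl; intro i _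
    by_cases h : (i : ℕ) + 1 < n
    · rw [if_pos h]
    · rw [if_neg h, hdrop _ h]; ring
  simp only [Finset.sum_add_distrib, hA2, hA4]
  have : ∀ i : Fin n,
      ((if (i : ℕ) + 1 < n then (y (i : ℕ))^2 else 0) + (y ((i : ℕ) + 1))^2)
      + y (i : ℕ) * y ((i : ℕ) + 1) + y (i : ℕ) * y ((i : ℕ) + 1) ≥ 0 := by
    intro i
    by_cases h : (i : ℕ) + 1 < n
    · rw [if_pos h]
      nlinarith [sq_nonneg (y (i : ℕ) + y ((i : ℕ) + 1))]
    · rw [if_neg h, hdrop _ h]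
      simp
  calc (0:ℝ) ≤ ∑ i : Fin n,
      (((if (i : ℕ) + 1 < n then (y (i : ℕ))^2 else 0) + (y ((i : ℕ) + 1))^2)
      + y (i : ℕ) * y ((i : ℕ) + 1) + y (i : ℕ) * y ((i : ℕ) + 1)) :=
        Finset.sum_nonneg (fun i _ => this i)
    _ = _ := by rw [Finset.sum_add_distrib, Finset.sum_add_distrib, Finset.sum_add_distrib]

lemma spectral_limit {m : Type} [Fintype m] [DecidableEq m] (Q : Matrix m m ℝ)
    (hQ : Q.PosSemidef) (k : m → ℝ)
    (hk : Q *ᵥ k = 0) (hker : ∀ v, Q *ᵥ v = 0 → ∃ c : ℝ, v = c • k)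
    (hkk : (0:ℝ) < k ⬝ᵥ k) (x₀ : m → ℝ) :
    Tendsto (fun t : ℝ => NormedSpace.exp ((-t) • Q) *ᵥ x₀) atTop
      (nhds (((k ⬝ᵥ x₀) / (k ⬝ᵥ k)) • k)) := by
  have hH : Q.IsHermitian := hQ.1
  set U : Matrix m m ℝ := (hH.eigenvectorUnitary : Matrix m m ℝ) with hUdef
  set μ : m → ℝ := hH.eigenvalues with hμdef
  have hU1 : U * star U = 1 := Matrix.mem_unitaryGroup_iff.mp hH.eigenvectorUnitary.2
  have hU2 : star U * U = 1 := Matrix.mem_unitaryGroup_iff'.mp hH.eigenvectorUnitary.2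
  have hUunit : IsUnit U := ⟨⟨U, star U, hU1, hU2⟩, rfl⟩
  have hUinv : U⁻¹ = star U := Matrix.inv_eq_right_inv hU1
  have hspec : Q = U * Matrix.diagonal μ * star U := by
    have := hH.spectral_theorem
    rwa [RCLike.ofReal_real_eq_id, Function.id_comp] at this
  set d : m → ℝ := fun i => if μ i = 0 then 1 else 0 with hd
  set L : Matrix m m ℝ := U * Matrix.diagonal d * star U with hL
  -- exponential formula
  have hexp : ∀ t : ℝ, NormedSpace.exp ((-t) • Q)
      = U * Matrix.diagonal (fun i => Real.exp (-t * μ i)) * star U := by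
    intro t
    have hsm : (-t) • Q = U * Matrix.diagonal (fun i => -t * μ i) * star U := by
      rw [hspec, ← Matrix.smul_mul, ← Matrix.mul_smul, ← Matrix.diagonal_smul]
      rfl
    rw [hsm, ← hUinv, Matrix.exp_conj U _ hUunit, Matrix.exp_diagonal, hUinv]
    congr 1
    congr 1
    congr 1
    rw [Pi.exp_def]
    funext i
    rw [← Real.exp_eq_exp_ℝ]
  -- limit of the diagonal
  have h1 : Tendsto (fun t : ℝ => (Matrix.diagonal (fun i => Real.exp (-t * μ i)) :
      Matrix m m ℝ)) atTop (nhds (Matrix.diagonal d)) := by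
    refine tendsto_pi_nhds.mpr ?_
    intro i
    refine tendsto_pi_nhds.mpr ?_
    intro j
    by_cases hij : i = j
    · subst hij
      simp only [Matrix.diagonal_apply_eq]
      by_cases hz : μ i = 0
      · have : d i = 1 := if_pos hz
        rw [this]
        simp only [hz, mul_zero, Real.exp_zero]
        exact tendsto_const_nhds
      · have hdi : d i = 0 := if_neg hz
        rw [hdi]
        have hpos : 0 < μ i := lt_of_le_of_ne (hQ.eigenvalues_nonneg i) (Ne.symm hz)
        exact Real.tendsto_exp_atBot.comp (Tendsto.atBot_mul_const hpos tendsto_neg_atTop_atBot)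
    · simp only [Matrix.diagonal_apply_ne _ hij]
      exact tendsto_const_nhds
  have hcont : Continuous fun M : Matrix m m ℝ => (U * M * star U) *ᵥ x₀ :=
    ((continuous_const.matrix_mul continuous_id).matrix_mul continuous_const).matrix_mulVec
      continuous_const
  have h2 : Tendsto (fun t : ℝ => NormedSpace.exp ((-t) • Q) *ᵥ x₀) atTop
      (nhds (L *ᵥ x₀)) := by
    have := (hcont.tendsto (Matrix.diagonal d)).comp h1
    apply Tendsto.congr _ this
    intro t
    simp only [Function.comp_apply]
    rw [hexp t]
  -- identify the limit
  have hkk' : k ⬝ᵥ k ≠ 0 := ne_of_gt hkk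
  have hQL : Q * L = 0 := by
    have hdd : Matrix.diagonal μ * Matrix.diagonal d = 0 := by
      rw [Matrix.diagonal_mul_diagonal]
      have : (fun i => μ i * d i) = fun _ => (0:ℝ) := by
        funext i
        by_cases hz : μ i = 0
        · rw [hz, zero_mul]
        · have : d i = 0 := if_neg hz
          rw [this, mul_zero]
      rw [this]
      exact Matrix.diagonal_zero
    rw [hspec, hL]
    calc U * Matrix.diagonal μ * star U * (U * Matrix.diagonal d * star U)
        = U * Matrix.diagonal μ * (star U * U) * Matrix.diagonal d * star U := by
          simp only [Matrix.mul_assoc]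
      _ = U * (Matrix.diagonal μ * Matrix.diagonal d) * star U := by
          rw [hU2]
          simp only [Matrix.mul_assoc, Matrix.one_mul]
      _ = 0 := by rw [hdd, Matrix.mul_zero, Matrix.zero_mul]
  have hLk : L *ᵥ k = k := by
    set w : m → ℝ := star U *ᵥ k with hw
    have hμw : ∀ i, μ i * w i = 0 := by
      have h0 : Matrix.diagonal μ *ᵥ w = 0 := by
        have e1 : star U *ᵥ (Q *ᵥ k) = 0 := by rw [hk, Matrix.mulVec_zero]
        rw [hspec] at e1
        rw [Matrix.mulVec_mulVec] at e1
        have e2 : star U * (U * Matrix.diagonal μ * star U)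
            = Matrix.diagonal μ * star U := by
          calc star U * (U * Matrix.diagonal μ * star U)
              = (star U * U) * Matrix.diagonal μ * star U := by simp only [Matrix.mul_assoc]
            _ = Matrix.diagonal μ * star U := by rw [hU2, Matrix.one_mul]
        rw [e2, ← Matrix.mulVec_mulVec] at e1
        exact e1
      intro i
      have := congrFun h0 i
      rwa [Matrix.mulVec_diagonal] at this
    have hdw : Matrix.diagonal d *ᵥ w = w := by
      funext i
      rw [Matrix.mulVec_diagonal]
      by_cases hz : μ i = 0
      · have hdi : d i = 1 := if_pos hz
        rw [hdi, one_mul]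
      · have hwi : w i = 0 := by
          have := hμw i
          exact (mul_eq_zero.mp this).resolve_left hz
        rw [hwi, mul_zero]
    rw [hL, ← Matrix.mulVec_mulVec, ← Matrix.mulVec_mulVec, ← hw, hdw, hw,
      Matrix.mulVec_mulVec, hU1, Matrix.one_mulVec]
  have hsUT : star U = Uᵀ := by
    ext i j
    simp [Matrix.star_eq_conjTranspose, Matrix.conjTranspose_apply]
  have hLsym : Lᵀ = L := by
    rw [hL, hsUT, Matrix.transpose_mul, Matrix.transpose_mul, Matrix.transpose_transpose,
      Matrix.diagonal_transpose, Matrix.mul_assoc]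
  set c : ℝ := (k ⬝ᵥ x₀) / (k ⬝ᵥ k) with hc
  set y : m → ℝ := x₀ - c • k with hy
  have hky : k ⬝ᵥ y = 0 := by
    rw [hy, dotProduct_sub, dotProduct_smul, smul_eq_mul, hc]
    field_simp
    ring
  have hLy : L *ᵥ y = 0 := by
    have hQLy : Q *ᵥ (L *ᵥ y) = 0 := by
      rw [Matrix.mulVec_mulVec, hQL, Matrix.zero_mulVec]
    obtain ⟨c', hc'⟩ := hker _ hQLy
    have hdot : k ⬝ᵥ (L *ᵥ y) = 0 := by
      rw [Matrix.dotProduct_mulVec, ← Matrix.mulVec_transpose, hLsym, hLk]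
      exact hky
    rw [hc', dotProduct_smul, smul_eq_mul] at hdot
    have : c' = 0 := by
      rcases mul_eq_zero.mp hdot with h | h
      · exact h
      · exact absurd h hkk'
    rw [hc', this, zero_smul]
  have hLx : L *ᵥ x₀ = c • k := by
    have : x₀ = y + c • k := by rw [hy]; abel
    rw [this, Matrix.mulVec_add, hLy, Matrix.mulVec_smul, hLk, zero_add]
  rw [← hLx]
  exact h2

/-- For the path graph `P_n` (`n ≥ 2`), with `Q = Δ(−1) = D + A` the signless Laplacian
and `k` the alternating vector `kᵢ = (−1)^i`, the solution `exp(−tQ) x₀` of `ẋ = −Qx`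
converges as `t → ∞` to `(1/n)(kᵀx₀) k`. -/
theorem path_signless_laplacian_limit (n : ℕ) (hn : 2 ≤ n) (x₀ : Fin n → ℝ) :
    Tendsto (fun t : ℝ => NormedSpace.exp ((-t) • defLap (pathAdj n) (-1)) *ᵥ x₀) atTop
      (nhds ((1 / (n : ℝ) * ((fun i : Fin n => (-1 : ℝ) ^ (i : ℕ)) ⬝ᵥ x₀)) •
        fun i : Fin n => (-1 : ℝ) ^ (i : ℕ))) := by
  have hkk : altV n ⬝ᵥ altV n = (n : ℝ) := by
    have h1 : ∀ i : Fin n, altV n i * altV n i = 1 := by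
      intro i
      rw [altV, ← pow_add]
      exact Even.neg_one_pow ⟨(i : ℕ), rfl⟩
    rw [dotProduct]
    simp only [h1]
    simp
  have hpos : (0:ℝ) < altV n ⬝ᵥ altV n := by
    rw [hkk]
    have : (0:ℕ) < n := by omega
    exact_mod_cast this
  have hlim := spectral_limit _ (Q_posSemidef n) (altV n) (Q_mulVec_alt n hn)
    (Q_kernel n hn) hpos x₀
  have hsc : altV n ⬝ᵥ x₀ / (altV n ⬝ᵥ altV n) = 1 / (n : ℝ) * (altV n ⬝ᵥ x₀) := by
    rw [hkk]; ring
  rw [hsc] at hlim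
  exact hlim
end

section
/- Let C_n be the cycle graph on n > 2 vertices and Δ(s) = s²(D − I) − sA + I its deformed Laplacian, viewed as a complex matrix. For each k ∈ {0,…,n−1}, the complex vector v with entries v_j = exp(2πi·kj/n), j ∈ {0,…,n−1}, satisfies Δ(s)·v = (s² − 2cos(2πk/n)s + 1)·v. Hence the eigenvalues of −Δ(s) are exactly the numbers −s² + 2cos(2π(k)/n)s − 1, k ∈ {0,…,n−1}. -/
open Matrix Complex

/-- Adjacency matrix (over `ℂ`) of the cycle graph `C_n` on vertices `0,…,n−1` (mod `n`):
`i` and `j` are adjacent iff `i − j ≡ ±1 (mod n)`. -/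
noncomputable def cycAdjC (n : ℕ) : Matrix (Fin n) (Fin n) ℂ :=
  fun i j => if ((i : ℕ) + 1) % n = (j : ℕ) ∨ ((j : ℕ) + 1) % n = (i : ℕ) then 1 else 0

/-- The degree matrix of the cycle graph over `ℂ`. -/
noncomputable def cycDegC (n : ℕ) : Matrix (Fin n) (Fin n) ℂ :=
  Matrix.diagonal fun i => ∑ j, cycAdjC n i j

/-- The deformed Laplacian `Δ(s) = s²(D − I) − sA + I` of the cycle graph, viewed as a
complex matrix (`s` a real parameter). -/
noncomputable def cycDefLapC (n : ℕ) (s : ℝ) : Matrix (Fin n) (Fin n) ℂ :=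
  (s : ℂ) ^ 2 • (cycDegC n - 1) - (s : ℂ) • cycAdjC n + 1

noncomputable def fvec (n k : ℕ) : Fin n → ℂ :=
  fun j => Complex.exp (2 * (Real.pi : ℂ) * Complex.I * (k : ℂ) * ((j : ℕ) : ℂ) / (n : ℂ))


lemma exp_mod (n k m : ℕ) (hn : 0 < n) :
    Complex.exp (2 * (Real.pi : ℂ) * Complex.I * (k : ℂ) * ((m % n : ℕ) : ℂ) / (n : ℂ))
      = Complex.exp (2 * (Real.pi : ℂ) * Complex.I * (k : ℂ) * (m : ℂ) / (n : ℂ)) := by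
  conv_rhs => rw [show (m : ℂ) = ((m % n : ℕ) : ℂ) + (n : ℂ) * ((m / n : ℕ) : ℂ) by
    push_cast; exact_mod_cast congrArg (Nat.cast : ℕ → ℂ) (Nat.mod_add_div m n).symm]
  have hn' : (n : ℂ) ≠ 0 := Nat.cast_ne_zero.mpr hn.ne'
  rw [show 2 * (Real.pi : ℂ) * Complex.I * (k : ℂ) *
        (((m % n : ℕ) : ℂ) + (n : ℂ) * ((m / n : ℕ) : ℂ)) / (n : ℂ)
      = 2 * (Real.pi : ℂ) * Complex.I * (k : ℂ) * ((m % n : ℕ) : ℂ) / (n : ℂ)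
        + ((k * (m / n) : ℕ) : ℂ) * (2 * (Real.pi : ℂ) * Complex.I) by
    push_cast; field_simp]
  rw [Complex.exp_add, Complex.exp_nat_mul_two_pi_mul_I, mul_one]

lemma adj_row_sum (n : ℕ) (hn : 2 < n) (i : Fin n) (f : Fin n → ℂ) :
    ∑ j, cycAdjC n i j * f j
      = f ⟨((i : ℕ) + 1) % n, Nat.mod_lt _ (by omega)⟩
        + f ⟨((i : ℕ) + (n - 1)) % n, Nat.mod_lt _ (by omega)⟩ := by
  set j1 : Fin n := ⟨((i : ℕ) + 1) % n, Nat.mod_lt _ (by omega)⟩ with hj1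
  set j2 : Fin n := ⟨((i : ℕ) + (n - 1)) % n, Nat.mod_lt _ (by omega)⟩ with hj2
  have hi : (i : ℕ) < n := i.isLt
  have hne : j1 ≠ j2 := by
    intro h
    have h' : ((i : ℕ) + 1) % n = ((i : ℕ) + (n - 1)) % n := congrArg Fin.val h
    rcases Nat.lt_or_ge ((i : ℕ) + 1) n with hc | hc
    · rw [Nat.mod_eq_of_lt hc] at h'
      rcases Nat.eq_zero_or_pos (i : ℕ) with h0 | h0
      · rw [h0] at h'
        simp only [Nat.zero_add] at h'
        rw [Nat.mod_eq_of_lt (by omega)] at h'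
        omega
      · rw [show (i : ℕ) + (n - 1) = ((i : ℕ) - 1) + n by omega, Nat.add_mod_right,
          Nat.mod_eq_of_lt (by omega)] at h'
        omega
    · have he : (i : ℕ) + 1 = n := by omega
      rw [he, Nat.mod_self] at h'
      rw [show (i : ℕ) + (n - 1) = (n - 2) + n by omega, Nat.add_mod_right,
        Nat.mod_eq_of_lt (by omega)] at h'
      omega
  have hcond : ∀ j : Fin n,
      ((((i : ℕ) + 1) % n = (j : ℕ) ∨ ((j : ℕ) + 1) % n = (i : ℕ)) ↔ (j = j1 ∨ j = j2)) := by
    intro j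
    constructor
    · rintro (h | h)
      · left; exact Fin.ext h.symm
      · right; apply Fin.ext
        show (j : ℕ) = ((i : ℕ) + (n - 1)) % n
        rw [← h, Nat.mod_add_mod, show (j : ℕ) + 1 + (n - 1) = (j : ℕ) + n by omega,
          Nat.add_mod_right, Nat.mod_eq_of_lt j.isLt]
    · rintro (h | h)
      · left; rw [h]
      · right; rw [h]
        show (((i : ℕ) + (n - 1)) % n + 1) % n = (i : ℕ)
        rw [Nat.mod_add_mod, show (i : ℕ) + (n - 1) + 1 = (i : ℕ) + n by omega,
          Nat.add_mod_right, Nat.mod_eq_of_lt hi]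
  have key : ∀ j : Fin n, cycAdjC n i j * f j
      = (if j = j1 then f j1 else 0) + (if j = j2 then f j2 else 0) := by
    intro j
    show (if (((i : ℕ) + 1) % n = (j : ℕ) ∨ ((j : ℕ) + 1) % n = (i : ℕ)) then (1:ℂ) else 0) * f j
      = _
    by_cases h : (((i : ℕ) + 1) % n = (j : ℕ) ∨ ((j : ℕ) + 1) % n = (i : ℕ))
    · rcases (hcond j).mp h with h1 | h1 <;> subst h1
      · rw [if_pos h, one_mul, if_pos rfl, if_neg hne, add_zero]
      · rw [if_pos h, one_mul, if_neg (Ne.symm hne), if_pos rfl, zero_add]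
    · have h1 : ¬ j = j1 := fun hc => h ((hcond j).mpr (Or.inl hc))
      have h2 : ¬ j = j2 := fun hc => h ((hcond j).mpr (Or.inr hc))
      simp [h, h1, h2]
  rw [Finset.sum_congr rfl fun j _ => key j, Finset.sum_add_distrib]
  simp [Finset.sum_ite_eq']

lemma adj_mulVec (n : ℕ) (hn : 2 < n) (k : ℕ) :
    cycAdjC n *ᵥ fvec n k
      = (2 * ((Real.cos (2 * Real.pi * k / n)) : ℂ)) • fvec n k := by
  have hn0 : 0 < n := by omega
  have hnC : (n : ℂ) ≠ 0 := Nat.cast_ne_zero.mpr hn0.ne'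
  funext i
  show ∑ j, cycAdjC n i j * fvec n k j = _
  rw [adj_row_sum n hn i]
  have h1 : fvec n k ⟨((i : ℕ) + 1) % n, Nat.mod_lt _ (by omega)⟩
      = Complex.exp (2 * (Real.pi : ℂ) * Complex.I * (k : ℂ) * ((((i : ℕ) + 1 : ℕ)) : ℂ) / (n : ℂ)) :=
    exp_mod n k _ hn0
  have h2 : fvec n k ⟨((i : ℕ) + (n - 1)) % n, Nat.mod_lt _ (by omega)⟩
      = Complex.exp (2 * (Real.pi : ℂ) * Complex.I * (k : ℂ) * ((((i : ℕ) + (n - 1) : ℕ)) : ℂ) / (n : ℂ)) :=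
    exp_mod n k _ hn0
  rw [h1, h2]
  have hA : 2 * (Real.pi : ℂ) * Complex.I * (k : ℂ) * ((((i : ℕ) + 1 : ℕ)) : ℂ) / (n : ℂ)
      = 2 * (Real.pi : ℂ) * Complex.I * (k : ℂ) * (((i : ℕ)) : ℂ) / (n : ℂ)
        + ((2 * Real.pi * k / n : ℝ) : ℂ) * Complex.I := by
    push_cast; field_simp
  have hB : 2 * (Real.pi : ℂ) * Complex.I * (k : ℂ) * ((((i : ℕ) + (n - 1) : ℕ)) : ℂ) / (n : ℂ)
      = (2 * (Real.pi : ℂ) * Complex.I * (k : ℂ) * (((i : ℕ)) : ℂ) / (n : ℂ)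
        + (-(((2 * Real.pi * k / n : ℝ) : ℂ) * Complex.I))) + (k : ℂ) * (2 * (Real.pi : ℂ) * Complex.I) := by
    push_cast [Nat.cast_sub (by omega : 1 ≤ n)]; field_simp; ring
  rw [hA, hB, Complex.exp_add, Complex.exp_add, Complex.exp_add,
    Complex.exp_nat_mul_two_pi_mul_I, mul_one]
  show _ = (2 * ((Real.cos (2 * Real.pi * k / n)) : ℂ)) * fvec n k i
  rw [Complex.ofReal_cos, Complex.two_cos]
  simp only [fvec]
  ring

lemma deg_eq (n : ℕ) (hn : 2 < n) : cycDegC n = (2 : ℂ) • 1 := by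
  have h : ∀ i : Fin n, ∑ j, cycAdjC n i j = 2 := by
    intro i
    rw [show (2 : ℂ) = 1 + 1 by norm_num]
    simpa using adj_row_sum n hn i (fun _ => (1 : ℂ))
  unfold cycDegC
  rw [show (fun i : Fin n => ∑ j, cycAdjC n i j) = fun _ => (2 : ℂ) from funext h]
  ext i j
  by_cases hij : i = j <;> simp [Matrix.diagonal_apply, Matrix.one_apply, hij]

lemma defLap_mulVec (n : ℕ) (hn : 2 < n) (s : ℝ) (k : ℕ) :
    cycDefLapC n s *ᵥ fvec n k
      = (((s : ℂ) ^ 2 - 2 * ((Real.cos (2 * Real.pi * k / n)) : ℂ) * (s : ℂ) + 1)) • fvec n k := by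
  have hD : cycDegC n - 1 = (1 : Matrix (Fin n) (Fin n) ℂ) := by
    rw [deg_eq n hn, two_smul]; abel
  unfold cycDefLapC
  rw [hD, Matrix.add_mulVec, Matrix.sub_mulVec, Matrix.smul_mulVec,
    Matrix.smul_mulVec, Matrix.one_mulVec, adj_mulVec n hn k]
  funext j
  simp only [Pi.add_apply, Pi.sub_apply, Pi.smul_apply, smul_eq_mul]
  ring


/-- For the cycle graph `C_n` (`n > 2`): for each `k`, the Fourier vector
`v_j = exp(2πi·kj/n)` satisfies `Δ(s) v = (s² − 2cos(2πk/n)s + 1) v`; hence the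
eigenvalues of `−Δ(s)` are exactly the numbers `−s² + 2cos(2πk/n)s − 1`, `k ∈ {0,…,n−1}`. -/
theorem cycle_defLap_eigen (n : ℕ) (hn : 2 < n) (s : ℝ) :
    (∀ k : Fin n,
      cycDefLapC n s *ᵥ
          (fun j : Fin n =>
            Complex.exp (2 * (Real.pi : ℂ) * Complex.I * ((k : ℕ) : ℂ) * ((j : ℕ) : ℂ) / (n : ℂ)))
        = (((s : ℂ) ^ 2 - 2 * ((Real.cos (2 * Real.pi * (k : ℕ) / (n : ℝ))) : ℂ) * (s : ℂ) + 1)) •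
            fun j : Fin n =>
              Complex.exp (2 * (Real.pi : ℂ) * Complex.I * ((k : ℕ) : ℂ) * ((j : ℕ) : ℂ) / (n : ℂ))) ∧
    (∀ t : ℂ,
      (∃ w : Fin n → ℂ, w ≠ 0 ∧ (-(cycDefLapC n s)) *ᵥ w = t • w) ↔
        ∃ k : Fin n,
          t = -(s : ℂ) ^ 2 + 2 * ((Real.cos (2 * Real.pi * (k : ℕ) / (n : ℝ))) : ℂ) * (s : ℂ) - 1) := by
  have hn0 : 0 < n := by omega
  have hnC : (n : ℂ) ≠ 0 := Nat.cast_ne_zero.mpr hn0.ne'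
  -- the stated vectors are `fvec`
  have hfv : ∀ k : Fin n,
      (fun j : Fin n =>
        Complex.exp (2 * (Real.pi : ℂ) * Complex.I * ((k : ℕ) : ℂ) * ((j : ℕ) : ℂ) / (n : ℂ)))
      = fvec n (k : ℕ) := fun k => rfl
  set μ : Fin n → ℂ := fun k =>
    -(s : ℂ) ^ 2 + 2 * ((Real.cos (2 * Real.pi * (k : ℕ) / (n : ℝ))) : ℂ) * (s : ℂ) - 1 with hμ
  have hM : ∀ k : Fin n, (-(cycDefLapC n s)) *ᵥ fvec n (k : ℕ) = μ k • fvec n (k : ℕ) := by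
    intro k
    rw [Matrix.neg_mulVec, defLap_mulVec n hn s (k : ℕ)]
    funext j
    simp only [Pi.neg_apply, Pi.smul_apply, smul_eq_mul, hμ]
    ring
  refine ⟨fun k => by rw [hfv k]; exact defLap_mulVec n hn s (k : ℕ), fun t => ?_⟩
  -- Vandermonde setup
  set ζ : ℂ := Complex.exp (2 * (Real.pi : ℂ) * Complex.I / (n : ℂ)) with hζ
  have hprim : IsPrimitiveRoot ζ n := by
    have := Complex.isPrimitiveRoot_exp n hn0.ne'
    convert this using 2
  set V : Matrix (Fin n) (Fin n) ℂ := Matrix.vandermonde (fun i : Fin n => ζ ^ (i : ℕ)) with hV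
  have hVentry : ∀ j k : Fin n, V j k = fvec n (k : ℕ) j := by
    intro j k
    show (ζ ^ (j : ℕ)) ^ (k : ℕ) = _
    rw [← pow_mul, hζ, ← Complex.exp_nat_mul]
    unfold fvec
    congr 1
    push_cast
    ring
  have hdet : V.det ≠ 0 := by
    rw [hV, Ne, Matrix.det_vandermonde_eq_zero_iff]
    rintro ⟨i, j, hij, hne⟩
    exact hne (Fin.ext (hprim.pow_inj i.isLt j.isLt hij))
  have hunit : IsUnit V.det := isUnit_iff_ne_zero.mpr hdet
  have hMV : (-(cycDefLapC n s)) * V = V * Matrix.diagonal μ := by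
    ext i k
    rw [Matrix.mul_diagonal, Matrix.mul_apply]
    have : ∑ j, (-(cycDefLapC n s)) i j * V j k
        = ((-(cycDefLapC n s)) *ᵥ fvec n (k : ℕ)) i := by
      rw [Matrix.mulVec]
      simp only [dotProduct]
      exact Finset.sum_congr rfl fun j _ => by rw [hVentry j k]
    rw [this, hM k]
    simp only [Pi.smul_apply, smul_eq_mul]
    rw [hVentry i k]
    ring
  constructor
  · rintro ⟨w, hw0, hw⟩
    set c : Fin n → ℂ := V⁻¹ *ᵥ w with hc
    have hwc : V *ᵥ c = w := by
      rw [hc, Matrix.mulVec_mulVec, Matrix.mul_nonsing_inv V hunit, Matrix.one_mulVec]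
    have hc0 : c ≠ 0 := by
      intro h
      rw [h] at hwc
      exact hw0 (by rw [← hwc, Matrix.mulVec_zero])
    have heq : Matrix.diagonal μ *ᵥ c = t • c := by
      have h1 : V *ᵥ (Matrix.diagonal μ *ᵥ c) = V *ᵥ (t • c) := by
        rw [Matrix.mulVec_mulVec, ← hMV, ← Matrix.mulVec_mulVec, hwc, hw,
          Matrix.mulVec_smul, hwc]
      have hinj : ∀ x y : Fin n → ℂ, V *ᵥ x = V *ᵥ y → x = y := by
        intro x y hxy
        have h2 := congrArg (fun v => V⁻¹ *ᵥ v) hxy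
        simpa [Matrix.mulVec_mulVec, Matrix.nonsing_inv_mul V hunit,
          Matrix.one_mulVec] using h2
      exact hinj _ _ h1
    obtain ⟨k, hk⟩ := Function.ne_iff.mp hc0
    refine ⟨k, ?_⟩
    have := congrFun heq k
    rw [Matrix.mulVec_diagonal] at this
    simp only [Pi.smul_apply, smul_eq_mul] at this
    exact (mul_right_cancel₀ hk this).symm
  · rintro ⟨k, rfl⟩
    refine ⟨fvec n (k : ℕ), ?_, hM k⟩
    intro h
    have := congrFun h ⟨0, hn0⟩
    simp [fvec] at this
end

section
/- Let C_n be the cycle graph on n > 2 vertices with n even, and Δ(s) = s²(D − I) − sA + I its deformed Laplacian. For every real s with s ≠ 1 and s ≠ −1, the matrix Δ(s) is positive definite (equivalently, the system ẋ = −Δ(s)x is asymptotically stable). -/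
open Matrix Filter

/-- Adjacency matrix of the cycle graph `C_n` on vertices `0,…,n−1` (mod `n`):
`i` and `j` are adjacent iff `i − j ≡ ±1 (mod n)`. -/
noncomputable def cycAdj (n : ℕ) : Matrix (Fin n) (Fin n) ℝ :=
  fun i j => if ((i : ℕ) + 1) % n = (j : ℕ) ∨ ((j : ℕ) + 1) % n = (i : ℕ) then 1 else 0

section Aux

variable {n : ℕ} [NeZero n]

lemma val_add_one (hn : 2 < n) (i : Fin n) : ((i + 1 : Fin n) : ℕ) = ((i : ℕ) + 1) % n := by
  rw [Fin.val_add, Fin.val_one']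
  rw [Nat.mod_eq_of_lt (show 1 < n by omega)]

lemma adj_iff (hn : 2 < n) (i j : Fin n) :
    ((((i : ℕ) + 1) % n = (j : ℕ)) ∨ (((j : ℕ) + 1) % n = (i : ℕ))) ↔ (j = i + 1 ∨ j = i - 1) := by
  have h1 : (((i : ℕ) + 1) % n = (j : ℕ)) ↔ j = i + 1 := by
    rw [Fin.ext_iff, val_add_one hn]
    exact eq_comm
  have h2 : (((j : ℕ) + 1) % n = (i : ℕ)) ↔ j = i - 1 := by
    rw [eq_sub_iff_add_eq, Fin.ext_iff, val_add_one hn]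
  rw [h1, h2]

lemma succ_ne_pred (hn : 2 < n) (i : Fin n) : (i + 1 : Fin n) ≠ i - 1 := by
  intro h
  have h2 : i + 1 + 1 = i := by rw [h, sub_add_cancel]
  have h3 : i + (1 + 1) = i + 0 := by rw [← add_assoc, h2, add_zero]
  have h4 : (1 + 1 : Fin n) = 0 := add_left_cancel h3
  have h5 : ((1 + 1 : Fin n) : ℕ) = 0 := by rw [h4]; rfl
  rw [Fin.val_add, Fin.val_one', Nat.mod_eq_of_lt (show 1 < n by omega),
    Nat.mod_eq_of_lt (show 1 + 1 < n by omega)] at h5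
  omega

lemma cycAdj_mulVec (hn : 2 < n) (x : Fin n → ℝ) (i : Fin n) :
    (cycAdj n *ᵥ x) i = x (i + 1) + x (i - 1) := by
  have key : ∀ j, cycAdj n i j * x j
      = (if i + 1 = j then x j else 0) + (if i - 1 = j then x j else 0) := by
    intro j
    unfold cycAdj
    by_cases hj1 : j = i + 1
    · subst hj1
      rw [if_pos (by rw [adj_iff hn]; left; rfl), if_pos rfl,
        if_neg (fun h => succ_ne_pred hn i h.symm)]
      ring
    · by_cases hj2 : j = i - 1
      · subst hj2
        rw [if_pos (by rw [adj_iff hn]; right; rfl), if_pos rfl,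
          if_neg (fun h => hj1 h.symm)]
        ring
      · rw [if_neg (by rw [adj_iff hn]; tauto), if_neg (fun h => hj1 h.symm),
          if_neg (fun h => hj2 h.symm)]
        ring
  rw [mulVec, dotProduct]
  simp only [key]
  rw [Finset.sum_add_distrib]
  simp

lemma cycAdj_rowsum (hn : 2 < n) (i : Fin n) : ∑ j, cycAdj n i j = 2 := by
  have := cycAdj_mulVec hn (fun _ => (1 : ℝ)) i
  simp only [mulVec, dotProduct, mul_one] at this
  rw [this]; norm_num

lemma defLap_mulVec_s6 (hn : 2 < n) (s : ℝ) (x : Fin n → ℝ) (i : Fin n) :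
    (defLap (cycAdj n) s *ᵥ x) i = (s ^ 2 + 1) * x i - s * (x (i + 1) + x (i - 1)) := by
  unfold defLap degMat
  rw [add_mulVec, sub_mulVec, smul_mulVec, smul_mulVec, sub_mulVec, one_mulVec]
  simp only [Pi.add_apply, Pi.sub_apply, Pi.smul_apply, smul_eq_mul, mulVec_diagonal,
    cycAdj_mulVec hn, cycAdj_rowsum hn]
  ring

lemma qform (hn : 2 < n) (s : ℝ) (x : Fin n → ℝ) :
    x ⬝ᵥ (defLap (cycAdj n) s *ᵥ x) = ∑ i, (s * x i - x (i + 1)) ^ 2 := by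
  have e1 : ∑ i : Fin n, x (i + 1) ^ 2 = ∑ i, x i ^ 2 :=
    Fintype.sum_equiv (Equiv.addRight 1) _ _ (fun i => by simp)
  have e2 : ∑ i : Fin n, x (i + 1) * x (i + 1 - 1) = ∑ j, x j * x (j - 1) :=
    Fintype.sum_equiv (Equiv.addRight 1) _ _ (fun i => by simp)
  simp only [add_sub_cancel_right] at e2
  rw [dotProduct]
  simp only [defLap_mulVec_s6 hn]
  have L : ∑ i, x i * ((s ^ 2 + 1) * x i - s * (x (i + 1) + x (i - 1)))
      = ∑ i, ((s ^ 2 + 1) * x i ^ 2 - s * (x i * x (i + 1)) - s * (x i * x (i - 1))) :=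
    Finset.sum_congr rfl fun i _ => by ring
  have R : ∑ i, (s * x i - x (i + 1)) ^ 2
      = ∑ i, (s ^ 2 * x i ^ 2 + x (i + 1) ^ 2 - 2 * s * (x i * x (i + 1))) :=
    Finset.sum_congr rfl fun i _ => by ring
  rw [L, R]
  simp only [Finset.sum_sub_distrib, Finset.sum_add_distrib, ← Finset.mul_sum]
  rw [e1, ← e2]
  have e3 : ∑ i : Fin n, x (i + 1) * x i = ∑ i, x i * x (i + 1) :=
    Finset.sum_congr rfl fun i _ => mul_comm _ _
  rw [e3]
  ring

lemma defLap_herm (s : ℝ) : (defLap (cycAdj n) s).IsHermitian := by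
  have hA : (cycAdj n)ᵀ = cycAdj n := by
    ext i j
    rw [transpose_apply]
    unfold cycAdj
    exact if_congr or_comm rfl rfl
  unfold Matrix.IsHermitian
  rw [conjTranspose_eq_transpose_of_trivial]
  unfold defLap degMat
  rw [transpose_add, transpose_sub, transpose_smul, transpose_smul, transpose_sub,
    transpose_one, diagonal_transpose, hA]

end Aux

open Fin.NatCast

/-- For the cycle graph `C_n` with `n > 2` even and every `s ∉ {−1, 1}`,
`Δ(s)` is positive definite. -/
theorem cycle_even_defLap_posDef (n : ℕ) (hn : 2 < n) (hev : Even n) (s : ℝ)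
    (hs1 : s ≠ 1) (hs2 : s ≠ -1) : (defLap (cycAdj n) s).PosDef := by
  have : NeZero n := ⟨by omega⟩
  refine PosDef.of_dotProduct_mulVec_pos (defLap_herm s) fun x hx => ?_
  have hst : star x = x := by funext i; exact star_trivial _
  rw [hst, qform hn]
  have hle : (0 : ℝ) ≤ ∑ i, (s * x i - x (i + 1)) ^ 2 :=
    Finset.sum_nonneg fun i _ => sq_nonneg _
  rcases hle.lt_or_eq with h | h
  · exact h
  exfalso
  have h0 : ∀ i : Fin n, x (i + 1) = s * x i := by
    intro i
    have h1 := (Finset.sum_eq_zero_iff_of_nonneg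
      (fun i _ => sq_nonneg (s * x i - x (i + 1)))).mp h.symm i (Finset.mem_univ i)
    have h2 := pow_eq_zero_iff (n := 2) (by norm_num) |>.mp h1
    linarith [sub_eq_zero.mp h2]
  have key : ∀ k : ℕ, x ((k : Fin n)) = s ^ k * x 0 := by
    intro k
    induction k with
    | zero => simp
    | succ k ih =>
      have hc : ((k + 1 : ℕ) : Fin n) = ((k : ℕ) : Fin n) + 1 := by push_cast; ring
      rw [hc, h0, ih]; ring
  have hsn : s ^ n ≠ 1 := by
    intro hpow
    obtain ⟨m, hm⟩ := hev
    have hm0 : 0 < m := by omega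
    have hpow2 : (s ^ 2) ^ m = 1 := by
      rw [← pow_mul]
      rw [hm] at hpow
      rw [show 2 * m = m + m by ring]
      exact hpow
    have hsq : s ^ 2 = 1 := by
      rcases lt_trichotomy (s ^ 2) 1 with hl | he | hg
      · have : (s ^ 2) ^ m < 1 := pow_lt_one₀ (sq_nonneg s) hl hm0.ne'
        linarith
      · exact he
      · have : 1 < (s ^ 2) ^ m := one_lt_pow₀ hg hm0.ne'
        linarith
    have hz : (s - 1) * (s + 1) = 0 := by nlinarith
    rcases mul_eq_zero.mp hz with h' | h'
    · exact hs1 (by linarith)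
    · exact hs2 (by linarith)
  have hx0 : x 0 = 0 := by
    have hk := key n
    rw [Fin.natCast_self] at hk
    have hz : (1 - s ^ n) * x 0 = 0 := by linarith
    rcases mul_eq_zero.mp hz with h' | h'
    · exact absurd (by linarith : s ^ n = 1) hsn
    · exact h'
  apply hx
  funext i
  have hk := key i.val
  rw [Fin.cast_val_eq_self, hx0] at hk
  simpa using hk
end

section
/- Let C_n be the cycle graph on n > 2 vertices and Δ(s) = s²(D − I) − sA + I its deformed Laplacian. Then for every real s, det(Δ(s)) = s^{2n} − 2s^n + 1 = (s^n − 1)². -/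
open Matrix Filter
open Fin.CommRing

/-- Cyclic shift matrix. -/
noncomputable def shiftP (n : ℕ) [NeZero n] : Matrix (Fin n) (Fin n) ℝ :=
  Matrix.of fun i j => if i + 1 = j then 1 else 0

section aux

variable (n : ℕ) [NeZero n]

lemma one_ne_zero_fin (hn : 1 < n) : (1 : Fin n) ≠ 0 := by
  intro h
  have := congrArg Fin.val h
  simp [Fin.val_one', Nat.mod_eq_of_lt hn] at this

lemma add_one_ne_self (hn : 1 < n) (i : Fin n) : i + 1 ≠ i := by
  intro h
  have : (1 : Fin n) = 0 := by
    have := congrArg (· - i) h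
    simpa [add_sub_cancel_right, sub_self, add_comm] using this
  exact one_ne_zero_fin n hn this

lemma mod_cond_iff (hn : 1 < n) (i j : Fin n) :
    ((i : ℕ) + 1) % n = (j : ℕ) ↔ i + 1 = j := by
  have h1 : ((i + 1 : Fin n) : ℕ) = ((i : ℕ) + 1) % n := by
    rw [Fin.val_add, Fin.val_one', Nat.mod_eq_of_lt hn]
  constructor
  · intro h; exact Fin.ext (by rw [h1, h])
  · intro h; rw [← h1, h]

omit [NeZero n] in
lemma not_both (hn : 2 < n) (i j : Fin n) :
    ¬(((i : ℕ) + 1) % n = (j : ℕ) ∧ ((j : ℕ) + 1) % n = (i : ℕ)) := by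
  rintro ⟨h1, h2⟩
  have hi := i.isLt
  have hj := j.isLt
  rcases Nat.lt_or_ge ((i : ℕ) + 1) n with h | h
  · rw [Nat.mod_eq_of_lt h] at h1
    rcases Nat.lt_or_ge ((j : ℕ) + 1) n with h' | h'
    · rw [Nat.mod_eq_of_lt h'] at h2; omega
    · have : (j : ℕ) + 1 = n := by omega
      rw [this, Nat.mod_self] at h2; omega
  · have : (i : ℕ) + 1 = n := by omega
    rw [this, Nat.mod_self] at h1
    rcases Nat.lt_or_ge ((j : ℕ) + 1) n with h' | h'
    · rw [Nat.mod_eq_of_lt h'] at h2; omega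
    · have : (j : ℕ) + 1 = n := by omega
      rw [this, Nat.mod_self] at h2; omega

lemma cycAdj_eq (hn : 2 < n) : cycAdj n = shiftP n + (shiftP n)ᵀ := by
  ext i j
  have hni : 1 < n := by omega
  simp only [cycAdj, shiftP, Matrix.add_apply, Matrix.transpose_apply, Matrix.of_apply]
  simp only [← mod_cond_iff n hni i j, ← mod_cond_iff n hni j i]
  rcases Classical.em (((i : ℕ) + 1) % n = (j : ℕ)) with h1 | h1 <;>
    rcases Classical.em (((j : ℕ) + 1) % n = (i : ℕ)) with h2 | h2
  · exact absurd ⟨h1, h2⟩ (not_both n hn i j)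
  · simp [h1, h2]
  · simp [h1, h2]
  · simp [h1, h2]

lemma shiftP_mul_transpose : shiftP n * (shiftP n)ᵀ = 1 := by
  ext i j
  simp only [Matrix.mul_apply, shiftP, Matrix.transpose_apply, Matrix.of_apply, Matrix.one_apply]
  rw [Finset.sum_eq_single (i + 1)]
  · simp only [if_pos rfl, one_mul]
    by_cases h : i = j
    · simp [h]
    · have : ¬(j + 1 = i + 1) := fun hh => h (by exact (add_left_inj 1).mp hh.symm)
      simp [h, this]
  · intro k _ hk
    rw [if_neg (fun hh => hk hh.symm), zero_mul]
  · intro h; exact absurd (Finset.mem_univ _) h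

lemma row_sum_shiftP (i : Fin n) : ∑ j, shiftP n i j = 1 := by
  simp only [shiftP, Matrix.of_apply]
  rw [Finset.sum_ite_eq Finset.univ (i + 1) (fun _ => (1 : ℝ))]
  simp

lemma row_sum_shiftPT (i : Fin n) : ∑ j, (shiftP n)ᵀ i j = 1 := by
  simp only [shiftP, Matrix.transpose_apply, Matrix.of_apply]
  have : ∀ j : Fin n, (j + 1 = i) ↔ (j = i - 1) := fun j => by
    constructor
    · intro h; rw [← h]; ring_nf
    · intro h; rw [h]; ring_nf
  simp_rw [if_congr (this _) rfl rfl]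
  rw [Finset.sum_ite_eq' Finset.univ (i - 1) (fun _ => (1 : ℝ))]
  simp

lemma degMat_cycAdj (hn : 2 < n) : degMat (cycAdj n) = (2 : ℝ) • 1 := by
  rw [degMat, cycAdj_eq n hn]
  ext i j
  rcases eq_or_ne i j with rfl | h
  · simp only [Matrix.diagonal_apply_eq, Matrix.add_apply, Finset.sum_add_distrib,
      row_sum_shiftP, row_sum_shiftPT, Matrix.smul_apply, Matrix.one_apply_eq]
    norm_num
  · simp [Matrix.diagonal_apply_ne _ h, Matrix.one_apply_ne h]

end aux

lemma det_one_sub_smul_shift (m : ℕ) (hm : 1 ≤ m) (s : ℝ) :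
    (1 - s • shiftP (m + 1)).det = 1 - s ^ (m + 1) := by
  haveI : NeZero (m + 1) := ⟨by omega⟩
  have hn1 : 1 < m + 1 := by omega
  set M : Matrix (Fin (m + 1)) (Fin (m + 1)) ℝ := 1 - s • shiftP (m + 1) with hM
  have hMapp : ∀ a b : Fin (m + 1), M a b =
      (if a = b then (1 : ℝ) else 0) - s * (if a + 1 = b then 1 else 0) := by
    intro a b
    simp [hM, Matrix.sub_apply, Matrix.smul_apply, Matrix.one_apply, shiftP]
  set c : Equiv.Perm (Fin (m + 1)) := (finRotate (m + 1))⁻¹ with hcdef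
  have hc : ∀ i : Fin (m + 1), c i = i - 1 := by
    intro i
    apply (finRotate (m + 1)).injective
    rw [hcdef]
    simp only [Equiv.Perm.inv_def, Equiv.apply_symm_apply, finRotate_succ_apply]
    ring
  have hc_ne : c ≠ 1 := by
    intro h
    have h0 := hc 0
    rw [h] at h0
    simp only [Equiv.Perm.coe_one, id_eq, zero_sub] at h0
    have h1 : (1 : Fin (m + 1)) = 0 := by
      have := congrArg (fun x => -x) h0
      simpa using this
    exact one_ne_zero_fin (m + 1) hn1 h1
  -- classification of permutations with nonzero contribution
  have hclass : ∀ τ : Equiv.Perm (Fin (m + 1)), (∀ i, τ i = i ∨ τ i = i - 1) → τ = 1 ∨ τ = c := by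
    intro τ hτ
    by_cases h1 : τ = 1
    · exact Or.inl h1
    right
    have : ∃ i₀, τ i₀ ≠ i₀ := by
      by_contra h
      push_neg at h
      exact h1 (Equiv.ext fun i => h i)
    obtain ⟨i₀, hi₀⟩ := this
    have hi₀' : τ i₀ = i₀ - 1 := (hτ i₀).resolve_left hi₀
    have step : ∀ x : Fin (m + 1), τ x = x - 1 → τ (x - 1) = x - 1 - 1 := by
      intro x hx
      rcases hτ (x - 1) with h' | h'
      · exfalso
        have : x - 1 = x := τ.injective (h'.trans hx.symm)
        rw [sub_eq_self] at this
        exact one_ne_zero_fin (m + 1) hn1 this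
      · exact h'
    have key : ∀ k : ℕ, τ (i₀ - (k : Fin (m + 1))) = i₀ - (k : Fin (m + 1)) - 1 := by
      intro k
      induction k with
      | zero => simpa using hi₀'
      | succ k ih =>
        have hcast : ((k + 1 : ℕ) : Fin (m + 1)) = (k : Fin (m + 1)) + 1 := by push_cast; ring
        rw [hcast, ← sub_sub]
        exact step _ ih
    ext j
    have hj : i₀ - ((((i₀ - j : Fin (m + 1))) : ℕ) : Fin (m + 1)) = j := by
      rw [Fin.cast_val_eq_self, sub_sub_cancel]
    have := key ((i₀ - j : Fin (m + 1)) : ℕ)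
    rw [hj] at this
    rw [this, hc]
  have hzero : ∀ τ : Equiv.Perm (Fin (m + 1)), τ ∈ (Finset.univ : Finset (Equiv.Perm (Fin (m + 1)))) →
      τ ∉ ({1, c} : Finset (Equiv.Perm (Fin (m + 1)))) →
      (Equiv.Perm.sign τ • ∏ i, M (τ i) i : ℝ) = 0 := by
    intro τ _ hτ
    simp only [Finset.mem_insert, Finset.mem_singleton, not_or] at hτ
    have : ¬(∀ i, τ i = i ∨ τ i = i - 1) := by
      intro h
      rcases hclass τ h with h' | h' <;> [exact hτ.1 h'; exact hτ.2 h']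
    push_neg at this
    obtain ⟨i, hi1, hi2⟩ := this
    have hfac : M (τ i) i = 0 := by
      rw [hMapp]
      have h2 : τ i + 1 ≠ i := fun h => hi2 (eq_sub_of_add_eq h)
      rw [if_neg hi1, if_neg h2]
      ring
    have hp : (∏ j, M (τ j) j : ℝ) = 0 := Finset.prod_eq_zero (Finset.mem_univ i) hfac
    rw [hp, smul_zero]
  have hsum : M.det = (Equiv.Perm.sign (1 : Equiv.Perm (Fin (m + 1))) • ∏ i, M ((1 : Equiv.Perm (Fin (m + 1))) i) i : ℝ)
      + (Equiv.Perm.sign c • ∏ i, M (c i) i : ℝ) := by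
    rw [Matrix.det_apply]
    rw [← Finset.sum_subset (Finset.subset_univ ({1, c} : Finset (Equiv.Perm (Fin (m + 1))))) hzero]
    rw [Finset.sum_pair (Ne.symm hc_ne)]
  have hprod1 : (∏ i, M ((1 : Equiv.Perm (Fin (m + 1))) i) i : ℝ) = 1 := by
    apply Finset.prod_eq_one
    intro i _
    simp only [Equiv.Perm.coe_one, id_eq]
    rw [hMapp, if_pos rfl, if_neg (add_one_ne_self (m + 1) hn1 i)]
    ring
  have hprodc : (∏ i, M (c i) i : ℝ) = (-s) ^ (m + 1) := by
    have step : ∀ i : Fin (m + 1), M (c i) i = -s := by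
      intro i
      rw [hMapp, hc]
      have h1 : i - 1 ≠ i := by
        intro h; rw [sub_eq_self] at h; exact one_ne_zero_fin (m + 1) hn1 h
      have h2 : i - 1 + 1 = i := by ring
      rw [if_neg h1, if_pos h2]
      ring
    calc (∏ i, M (c i) i : ℝ) = ∏ _i : Fin (m + 1), (-s) := Finset.prod_congr rfl fun i _ => step i
      _ = (-s) ^ (m + 1) := by rw [Finset.prod_const, Finset.card_univ, Fintype.card_fin]
  have hsign : Equiv.Perm.sign c = (-1 : ℤˣ) ^ m := by
    rw [hcdef, map_inv, sign_finRotate]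
    simp
  rw [hsum, hprod1, hprodc, hsign]
  simp only [_root_.map_one, one_smul, Units.smul_def, Units.val_pow_eq_pow_val, Units.val_neg,
    Units.val_one, zsmul_eq_mul]
  push_cast
  rw [show (-s : ℝ) ^ (m + 1) = (-1) ^ (m + 1) * s ^ (m + 1) by rw [neg_pow]]
  rw [show (-1 : ℝ) ^ m * ((-1) ^ (m + 1) * s ^ (m + 1)) = ((-1) ^ (m + m + 1)) * s ^ (m+1) by
    rw [← mul_assoc, ← pow_add]; ring_nf]
  rw [Odd.neg_one_pow ⟨m, by ring⟩]
  ring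

/-- For the cycle graph `C_n` (`n > 2`), `det Δ(s) = s^{2n} − 2sⁿ + 1 = (sⁿ − 1)²`. -/
theorem cycle_defLap_det (n : ℕ) (hn : 2 < n) (s : ℝ) :
    (defLap (cycAdj n) s).det = s ^ (2 * n) - 2 * s ^ n + 1 ∧
    (defLap (cycAdj n) s).det = (s ^ n - 1) ^ 2 := by
  haveI : NeZero n := ⟨by omega⟩
  have hfact : defLap (cycAdj n) s = (1 - s • shiftP n) * (1 - s • (shiftP n)ᵀ) := by
    rw [defLap, degMat_cycAdj n hn, cycAdj_eq n hn]
    have hPPt := shiftP_mul_transpose n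
    have expand : (1 - s • shiftP n) * (1 - s • (shiftP n)ᵀ)
        = 1 - s • (shiftP n)ᵀ - s • shiftP n + (s * s) • (shiftP n * (shiftP n)ᵀ) := by
      rw [mul_sub, sub_mul, sub_mul, one_mul, one_mul, mul_one, smul_mul_smul_comm]
      abel
    rw [expand, hPPt]
    rw [two_smul]
    module
  obtain ⟨m, rfl⟩ : ∃ m, n = m + 1 := ⟨n - 1, by omega⟩
  have hdet1 : (1 - s • (shiftP (m + 1))ᵀ).det = 1 - s ^ (m + 1) := by
    have : (1 - s • (shiftP (m + 1))ᵀ) = (1 - s • shiftP (m + 1))ᵀ := by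
      rw [Matrix.transpose_sub, Matrix.transpose_smul, Matrix.transpose_one]
    rw [this, Matrix.det_transpose]
    exact det_one_sub_smul_shift m (by omega) s
  have hd : (defLap (cycAdj (m + 1)) s).det = (1 - s ^ (m + 1)) * (1 - s ^ (m + 1)) := by
    rw [hfact, Matrix.det_mul, det_one_sub_smul_shift m (by omega) s, hdet1]
  constructor
  · rw [hd, show 2 * (m + 1) = (m + 1) * 2 from mul_comm _ _, pow_mul]
    ring
  · rw [hd]; ring
end

section
/- Let K_n be the complete graph on n > 2 vertices and Δ(s) = s²(D − I) − sA + I its deformed Laplacian. Then Δ(s) is positive definite for every real s with s > 1 or s < 1/(n−2), and for every s in the open interval (1/(n−2), 1) there exists a vector v with vᵀΔ(s)v < 0 (so the system ẋ = −Δ(s)x is asymptotically stable in the first case and unstable in the second). -/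
open Matrix Filter

noncomputable def compAdj (n : ℕ) : Matrix (Fin n) (Fin n) ℝ :=
  fun i j => if i ≠ j then 1 else 0

lemma compAdj_rowsum (n : ℕ) (i : Fin n) :
    ∑ j, compAdj n i j = (n : ℝ) - 1 := by
  have h : ∀ j : Fin n, compAdj n i j = 1 - (if j = i then 1 else 0) := by
    intro j
    rcases eq_or_ne i j with h | h
    · simp [compAdj, h]
    · simp [compAdj, h, Ne.symm h]
  simp [h, Finset.sum_sub_distrib, Finset.sum_ite_eq']

lemma defLap_compAdj_entry (n : ℕ) (s : ℝ) (i j : Fin n) :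
    defLap (compAdj n) s i j = if i = j then s ^ 2 * ((n : ℝ) - 2) + 1 else -s := by
  have hA : compAdj n i j = if i = j then 0 else 1 := by
    by_cases h : i = j <;> simp [compAdj, h]
  simp only [defLap, degMat, Matrix.sub_apply, Matrix.add_apply, Matrix.smul_apply,
    Matrix.diagonal_apply, Matrix.one_apply, compAdj_rowsum, hA, smul_eq_mul]
  by_cases h : i = j
  · simp [h]
    left
    ring
  · simp [h]

lemma quad_form (n : ℕ) (s : ℝ) (v : Fin n → ℝ) :
    v ⬝ᵥ (defLap (compAdj n) s *ᵥ v)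
      = (s ^ 2 * ((n : ℝ) - 2) + s + 1) * (∑ i, v i ^ 2) - s * (∑ i, v i) ^ 2 := by
  set c : ℝ := s ^ 2 * ((n : ℝ) - 2) + 1 with hc
  have hin : ∀ i, (defLap (compAdj n) s *ᵥ v) i = (c + s) * v i - s * ∑ j, v j := by
    intro i
    have h1 : ∀ j : Fin n, defLap (compAdj n) s i j * v j
        = (if j = i then (c + s) * v j else 0) - s * v j := by
      intro j
      rw [defLap_compAdj_entry]
      by_cases h : i = j
      · subst h; simp; ring
      · have h' : ¬ j = i := fun e => h e.symm
        simp [h, h']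
    simp only [mulVec, dotProduct]
    rw [Finset.sum_congr rfl fun j _ => h1 j, Finset.sum_sub_distrib,
      Finset.sum_ite_eq' Finset.univ i]
    simp [Finset.mul_sum]
  simp only [dotProduct, hin]
  have h2 : ∀ i, v i * ((c + s) * v i - s * ∑ j, v j)
      = (c + s) * v i ^ 2 - (s * ∑ j, v j) * v i := by intro i; ring
  rw [Finset.sum_congr rfl fun i _ => h2 i, Finset.sum_sub_distrib, ← Finset.mul_sum,
    ← Finset.mul_sum, hc]
  ring

/-- For the complete graph `K_n` (`n > 2`): `Δ(s)` is positive definite for `s > 1` or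
`s < 1/(n−2)`, and for `1/(n−2) < s < 1` there is `v` with `vᵀ Δ(s) v < 0`. -/
theorem complete_defLap_stability (n : ℕ) (hn : 2 < n) (s : ℝ) :
    ((1 < s ∨ s < 1 / ((n : ℝ) - 2)) → (defLap (compAdj n) s).PosDef) ∧
    (1 / ((n : ℝ) - 2) < s → s < 1 →
      ∃ v : Fin n → ℝ, v ⬝ᵥ (defLap (compAdj n) s *ᵥ v) < 0) := by
  have hn3 : (3 : ℝ) ≤ (n : ℝ) := by exact_mod_cast hn
  have hn2 : (0 : ℝ) < (n : ℝ) - 2 := by linarith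
  constructor
  · intro hs
    refine posDef_iff_dotProduct_mulVec.mpr ⟨?_, ?_⟩
    · ext i j
      simp only [conjTranspose_apply, defLap_compAdj_entry, star_trivial]
      by_cases h : i = j <;> simp [h, eq_comm]
    · intro x hx
      have hQ : 0 < ∑ i, x i ^ 2 := by
        obtain ⟨i, hi⟩ := Function.ne_iff.mp hx
        exact Finset.sum_pos' (fun i _ => sq_nonneg _)
          ⟨i, Finset.mem_univ i, sq_pos_of_ne_zero hi⟩
      have hform : star x ⬝ᵥ (defLap (compAdj n) s *ᵥ x)
          = (s ^ 2 * ((n : ℝ) - 2) + s + 1) * (∑ i, x i ^ 2) - s * (∑ i, x i) ^ 2 := by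
        rw [show (star x : Fin n → ℝ) = x from funext fun i => star_trivial _, quad_form]
      rw [hform]
      have ha : 0 < s ^ 2 * ((n : ℝ) - 2) + s + 1 := by
        nlinarith [mul_nonneg (sq_nonneg s) (show (0:ℝ) ≤ (n:ℝ) - 3 by linarith),
          sq_nonneg (2*s + 1)]
      rcases le_or_gt s 0 with h0 | h0
      · nlinarith [sq_nonneg (∑ i, x i)]
      · have hCS : (∑ i, x i) ^ 2 ≤ (n : ℝ) * ∑ i, x i ^ 2 := by
          have := sq_sum_le_card_mul_sum_sq (s := (Finset.univ : Finset (Fin n))) (f := x)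
          simpa using this
        have key : 0 < s ^ 2 * ((n : ℝ) - 2) + s + 1 - s * (n : ℝ) := by
          rcases hs with hs | hs
          · have f1 : 0 < s * ((n : ℝ) - 2) - 1 := by nlinarith
            have f2 : 0 < s - 1 := by linarith
            nlinarith [mul_pos f1 f2]
          · have hlt : s * ((n : ℝ) - 2) < 1 := by
              rw [lt_div_iff₀ hn2] at hs; linarith
            have f1 : s * ((n : ℝ) - 2) - 1 < 0 := by linarith
            have f2 : s - 1 < 0 := by nlinarith
            nlinarith [mul_pos_of_neg_of_neg f1 f2]
        nlinarith [mul_le_mul_of_nonneg_left hCS h0.le]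
  · intro h1 h2
    refine ⟨fun _ => 1, ?_⟩
    rw [quad_form]
    have hs2 : 1 < s * ((n : ℝ) - 2) := by rw [div_lt_iff₀ hn2] at h1; linarith
    simp only [one_pow, Finset.sum_const, Finset.card_univ, Fintype.card_fin, nsmul_eq_mul,
      mul_one]
    have f1 : 0 < s * ((n : ℝ) - 2) - 1 := by linarith
    have f2 : s - 1 < 0 := by linarith
    have hneg := mul_neg_of_pos_of_neg f1 f2
    nlinarith [mul_pos (show (0:ℝ) < (n:ℝ) by linarith) (neg_pos.mpr hneg)]
end

section
/- Let K_{1,n} be the star graph with one center and n ≥ 3 leaves, and Δ(s) = s²(D − I) − sA + I its deformed Laplacian (an (n+1)×(n+1) matrix). Then Δ(s) is positive definite for every real s with |s| < 1, and for every real s with |s| > 1 there exists a vector v with vᵀΔ(s)v < 0 (so the system ẋ = −Δ(s)x is asymptotically stable for |s| < 1 and unstable for |s| > 1). -/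
open Matrix Filter

/-- Adjacency matrix of the star graph `K_{1,n}` on `Fin (n+1)`, with center `0`:
each leaf is adjacent exactly to the center. -/
noncomputable def starAdj (n : ℕ) : Matrix (Fin (n + 1)) (Fin (n + 1)) ℝ :=
  fun i j => if (i = 0 ∧ j ≠ 0) ∨ (j = 0 ∧ i ≠ 0) then 1 else 0

lemma quad (n : ℕ) (s : ℝ) (v : Fin (n+1) → ℝ) :
    v ⬝ᵥ (defLap (starAdj n) s *ᵥ v) =
    (1 - s^2) * v 0 ^ 2 + ∑ j : Fin n, (v j.succ - s * v 0)^2 := by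
  simp only [defLap, degMat, starAdj, dotProduct, mulVec, Matrix.add_apply, Matrix.sub_apply,
    Matrix.smul_apply, Matrix.one_apply, Matrix.diagonal_apply, smul_eq_mul]
  simp [Fin.sum_univ_succ, Fin.succ_ne_zero, sub_sq, Finset.sum_add_distrib, Finset.mul_sum,
    Finset.sum_sub_distrib, mul_add, add_mul, sub_mul, mul_sub]
  simp [Finset.filter_eq', Finset.filter_ne']
  ring_nf
  have h1 : ∑ x : Fin n, (2:ℝ) * v x.succ * v 0 * s = (∑ x : Fin n, v 0 * s * v x.succ) * 2 := by
    rw [Finset.sum_mul]; exact Finset.sum_congr rfl (fun x _ => by ring)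
  have h2 : ∑ i : Fin n, v i.succ * v i.succ = ∑ x : Fin n, v x.succ ^ 2 := by
    exact Finset.sum_congr rfl (fun x _ => by ring)
  rw [Finset.sum_mul]; ring

lemma herm (n : ℕ) (s : ℝ) : (defLap (starAdj n) s).IsHermitian := by
  refine Matrix.IsHermitian.ext fun i j => ?_
  simp only [defLap, degMat, starAdj, Matrix.add_apply, Matrix.sub_apply, Matrix.smul_apply,
    Matrix.one_apply, Matrix.diagonal_apply, smul_eq_mul, RCLike.star_def, conj_trivial]
  by_cases h : i = j <;> simp [h, eq_comm, or_comm]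

/-- For the star graph `K_{1,n}` (`n ≥ 3` leaves): `Δ(s)` is positive definite for
`|s| < 1`, and for `|s| > 1` there is `v` with `vᵀ Δ(s) v < 0`. -/
theorem star_defLap_stability (n : ℕ) (hn : 3 ≤ n) (s : ℝ) :
    (|s| < 1 → (defLap (starAdj n) s).PosDef) ∧
    (1 < |s| → ∃ v : Fin (n + 1) → ℝ, v ⬝ᵥ (defLap (starAdj n) s *ᵥ v) < 0) := by
  constructor
  · intro hs
    have hs2 : s ^ 2 < 1 := by
      have := abs_nonneg s
      nlinarith [sq_abs s]
    refine Matrix.posDef_iff_dotProduct_mulVec.mpr ⟨herm n s, fun x hx => ?_⟩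
    simp only [star_trivial, RCLike.re_to_real]
    rw [quad]
    have hsum : 0 ≤ ∑ j : Fin n, (x j.succ - s * x 0) ^ 2 :=
      Finset.sum_nonneg fun j _ => sq_nonneg _
    by_cases h0 : x 0 = 0
    · have : ∃ j : Fin n, x j.succ ≠ 0 := by
        by_contra h
        push_neg at h
        apply hx
        funext i
        refine Fin.cases h0 (fun j => h j) i
      obtain ⟨j, hj⟩ := this
      have hpos : 0 < ∑ j : Fin n, (x j.succ - s * x 0) ^ 2 := by
        refine Finset.sum_pos' (fun k _ => sq_nonneg _) ⟨j, Finset.mem_univ j, ?_⟩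
        have : x j.succ - s * x 0 ≠ 0 := by rw [h0]; simpa using hj
        positivity
      nlinarith
    · have : 0 < (1 - s ^ 2) * x 0 ^ 2 := by
        have := sq_nonneg (x 0)
        have hx0 : 0 < x 0 ^ 2 := by positivity
        nlinarith
      linarith
  · intro hs
    have hs2 : 1 < s ^ 2 := by nlinarith [sq_abs s]
    refine ⟨fun i => if i = 0 then 1 else s, ?_⟩
    rw [quad]
    simp [Fin.succ_ne_zero]
    linarith
end

section
/- Let Q_m be the m-cube (hypercube) graph with m ≥ 3 (so n = 2^m > 4 vertices), and Δ(s) = s²(D − I) − sA + I its deformed Laplacian. Then Δ(s) is positive definite for every real s with |s| > 1 or |s| < 1/(m−1), and for every real s with 1/(m−1) < |s| < 1 there exists a vector v with vᵀΔ(s)v < 0 (so the system ẋ = −Δ(s)x is asymptotically stable in the first case and unstable in the second). -/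
open Matrix Filter

/-- Adjacency matrix of the `m`-cube (hypercube) graph `Q_m`, with vertex set
`{0,1}^m` (functions `Fin m → ZMod 2`), two vertices adjacent iff they differ in
exactly one coordinate. -/
noncomputable def cubeAdj (m : ℕ) : Matrix (Fin m → ZMod 2) (Fin m → ZMod 2) ℝ :=
  fun x y => if (Finset.univ.filter fun i => x i ≠ y i).card = 1 then 1 else 0

lemma cubeAdj_symm (m : ℕ) (x y : Fin m → ZMod 2) : cubeAdj m x y = cubeAdj m y x := by
  have h : (Finset.univ.filter fun i => x i ≠ y i) = (Finset.univ.filter fun i => y i ≠ x i) := by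
    simp [ne_comm]
  simp only [cubeAdj, h]

lemma cube_nbr_card (m : ℕ) (x : Fin m → ZMod 2) :
    (Finset.univ.filter fun z : Fin m → ZMod 2 => (Finset.univ.filter fun i => x i ≠ z i).card = 1).card = m := by
  have key : ((Finset.univ : Finset (Fin m)).card
      = (Finset.univ.filter fun z : Fin m → ZMod 2 => (Finset.univ.filter fun i => x i ≠ z i).card = 1).card) := by
    apply Finset.card_bij (fun a _ => Function.update x a (x a + 1))
    · intro a _
      simp only [Finset.mem_filter, Finset.mem_univ, true_and]
      have h : (Finset.univ.filter fun i => x i ≠ Function.update x a (x a + 1) i) = {a} := by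
        ext j
        simp only [Finset.mem_filter, Finset.mem_univ, true_and, Finset.mem_singleton]
        rcases eq_or_ne j a with rfl | hj
        · simp only [Function.update_self, iff_true]
          exact (by decide : ∀ u : ZMod 2, u ≠ u + 1) _
        · simp [Function.update_of_ne hj, hj]
      rw [h, Finset.card_singleton]
    · intro a _ b _ hab
      by_contra hne
      have h := congrFun hab a
      rw [Function.update_self, Function.update_of_ne hne] at h
      exact (by decide : ∀ u : ZMod 2, u + 1 ≠ u) _ h
    · intro z hz
      simp only [Finset.mem_filter, Finset.mem_univ, true_and] at hz
      obtain ⟨a, ha⟩ := Finset.card_eq_one.mp hz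
      refine ⟨a, Finset.mem_univ a, ?_⟩
      funext j
      rcases eq_or_ne j a with rfl | hj
      · rw [Function.update_self]
        have hmem : j ∈ (Finset.univ.filter fun i => x i ≠ z i) := by
          rw [ha]; exact Finset.mem_singleton_self _
        simp only [Finset.mem_filter] at hmem
        exact ((by decide : ∀ u v : ZMod 2, u ≠ v → v = u + 1) _ _ hmem.2).symm
      · rw [Function.update_of_ne hj]
        have h : j ∉ (Finset.univ.filter fun i => x i ≠ z i) := by rw [ha]; simpa using hj
        simp only [Finset.mem_filter, Finset.mem_univ, true_and, not_not] at h
        exact h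
  rw [← key, Finset.card_univ, Fintype.card_fin]

lemma cubeAdj_rowsum (m : ℕ) (x : Fin m → ZMod 2) : ∑ y, cubeAdj m x y = m := by
  unfold cubeAdj
  rw [Finset.sum_boole]
  exact_mod_cast congrArg (Nat.cast : ℕ → ℝ) (cube_nbr_card m x)

lemma degMat_cube (m : ℕ) : degMat (cubeAdj m) = (m : ℝ) • (1 : Matrix (Fin m → ZMod 2) (Fin m → ZMod 2) ℝ) := by
  unfold degMat
  rw [Matrix.smul_one_eq_diagonal]
  have h : (fun i : Fin m → ZMod 2 => ∑ j, cubeAdj m i j) = fun _ => (m : ℝ) :=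
    funext (cubeAdj_rowsum m)
  rw [h]

lemma quad_eq (m : ℕ) (s : ℝ) (v : (Fin m → ZMod 2) → ℝ) :
    v ⬝ᵥ (defLap (cubeAdj m) s *ᵥ v)
      = (((m : ℝ) - 1) * s ^ 2 + 1) * (v ⬝ᵥ v) - s * (v ⬝ᵥ (cubeAdj m *ᵥ v)) := by
  unfold defLap
  rw [degMat_cube]
  simp only [Matrix.add_mulVec, Matrix.sub_mulVec, Matrix.smul_mulVec, Matrix.one_mulVec,
    dotProduct_add, dotProduct_sub, dotProduct_smul, smul_eq_mul, smul_sub, dotProduct_sub,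
    dotProduct_smul]
  ring

lemma quad_bound (m : ℕ) (v : (Fin m → ZMod 2) → ℝ) :
    |v ⬝ᵥ (cubeAdj m *ᵥ v)| ≤ (m : ℝ) * (v ⬝ᵥ v) := by
  have h1 : v ⬝ᵥ (cubeAdj m *ᵥ v) = ∑ x, ∑ y, v x * (cubeAdj m x y * v y) := by
    simp [dotProduct, Matrix.mulVec, dotProduct, Finset.mul_sum]
  rw [h1]
  have step1 : |∑ x, ∑ y, v x * (cubeAdj m x y * v y)|
      ≤ ∑ x, ∑ y, cubeAdj m x y * ((v x ^ 2 + v y ^ 2) / 2) := by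
    refine le_trans (Finset.abs_sum_le_sum_abs _ _) ?_
    refine Finset.sum_le_sum fun x _ => ?_
    refine le_trans (Finset.abs_sum_le_sum_abs _ _) ?_
    refine Finset.sum_le_sum fun y _ => ?_
    unfold cubeAdj
    split
    · rw [abs_mul, abs_mul]
      simp only [abs_one, one_mul]
      nlinarith [sq_nonneg (|v x| - |v y|), sq_abs (v x), sq_abs (v y), abs_nonneg (v x), abs_nonneg (v y)]
    · simp
  refine le_trans step1 (le_of_eq ?_)
  have expand : ∀ x y : Fin m → ZMod 2, cubeAdj m x y * ((v x ^ 2 + v y ^ 2) / 2)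
      = cubeAdj m x y * v x ^ 2 / 2 + cubeAdj m x y * v y ^ 2 / 2 := by intros; ring
  have hA : ∀ x : Fin m → ZMod 2, ∑ y, cubeAdj m x y * v x ^ 2 / 2 = (m : ℝ) * v x ^ 2 / 2 := by
    intro x
    rw [← Finset.sum_div, ← Finset.sum_mul, cubeAdj_rowsum]
  have hB : ∀ x : Fin m → ZMod 2,
      ∑ y, cubeAdj m x y * v y ^ 2 / 2 = ∑ y, cubeAdj m y x * v y ^ 2 / 2 := by
    intro x; exact Finset.sum_congr rfl fun y _ => by rw [cubeAdj_symm]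
  have e1 : ∀ x : Fin m → ZMod 2, ∑ y, cubeAdj m x y * ((v x ^ 2 + v y ^ 2) / 2)
      = (m : ℝ) * v x ^ 2 / 2 + ∑ y, cubeAdj m y x * v y ^ 2 / 2 := by
    intro x
    rw [Finset.sum_congr rfl fun y _ => expand x y, Finset.sum_add_distrib, hA x, hB x]
  rw [Finset.sum_congr rfl fun x _ => e1 x, Finset.sum_add_distrib, Finset.sum_comm]
  have hC : ∀ y : Fin m → ZMod 2, ∑ x, cubeAdj m y x * v y ^ 2 / 2 = (m : ℝ) * v y ^ 2 / 2 := by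
    intro y
    rw [← Finset.sum_div, ← Finset.sum_mul, cubeAdj_rowsum]
  rw [Finset.sum_congr rfl fun y _ => hC y]
  have hvv : v ⬝ᵥ v = ∑ x, v x ^ 2 := by simp [dotProduct, sq]
  rw [hvv, Finset.mul_sum, ← Finset.sum_add_distrib]
  exact Finset.sum_congr rfl fun x _ => by ring

lemma defLap_herm_s15 (m : ℕ) (s : ℝ) : (defLap (cubeAdj m) s).IsHermitian := by
  unfold Matrix.IsHermitian
  ext x y
  simp only [Matrix.conjTranspose_apply, defLap, degMat, Matrix.add_apply, Matrix.sub_apply,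
    Matrix.smul_apply, Matrix.one_apply, Matrix.diagonal_apply, smul_eq_mul, star_trivial]
  rw [cubeAdj_symm m y x, cubeAdj_rowsum, cubeAdj_rowsum]
  by_cases h : x = y <;> simp [h, eq_comm]

lemma ones_eigen (m : ℕ) :
    cubeAdj m *ᵥ (fun _ => (1 : ℝ)) = (m : ℝ) • (fun _ => (1 : ℝ)) := by
  funext x
  simp only [Matrix.mulVec, dotProduct, mul_one, Pi.smul_apply, smul_eq_mul]
  rw [cubeAdj_rowsum]

lemma parity_sq (m : ℕ) (x : Fin m → ZMod 2) :
    ((-1 : ℝ) ^ (∑ i, (x i).val)) * ((-1 : ℝ) ^ (∑ i, (x i).val)) = 1 := by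
  rw [← pow_add, ← two_mul]
  exact Even.neg_one_pow ⟨_, (two_mul _)⟩

lemma parity_neighbor (m : ℕ) (x y : Fin m → ZMod 2)
    (h : (Finset.univ.filter fun i => x i ≠ y i).card = 1) :
    ((-1 : ℝ) ^ (∑ i, (y i).val)) = -((-1 : ℝ) ^ (∑ i, (x i).val)) := by
  have hodd : Odd (∑ i, (x i).val + ∑ i, (y i).val) := by
    rw [Nat.odd_iff]
    have hcast : (((∑ i, (x i).val + ∑ i, (y i).val : ℕ)) : ZMod 2) = 1 := by
      push_cast
      rw [← Finset.sum_add_distrib]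
      have hterm : ∀ i, ((((x i).val : ZMod 2)) + (((y i).val : ZMod 2)))
          = (if x i ≠ y i then (1 : ZMod 2) else 0) := by
        intro i
        rw [ZMod.natCast_val, ZMod.natCast_val, ZMod.cast_id, ZMod.cast_id]
        exact (by decide : ∀ u v : ZMod 2, u + v = if u ≠ v then 1 else 0) (x i) (y i)
      rw [Finset.sum_congr rfl fun i _ => hterm i, Finset.sum_boole, h]
      norm_num
    have hval := congrArg ZMod.val hcast
    rwa [ZMod.val_natCast, ZMod.val_one] at hval
  have hp : ((-1 : ℝ) ^ (∑ i, (x i).val)) * ((-1 : ℝ) ^ (∑ i, (y i).val)) = -1 := by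
    rw [← pow_add]
    exact Odd.neg_one_pow hodd
  have hq := parity_sq m x
  set u := ((-1 : ℝ) ^ (∑ i, (x i).val))
  set w := ((-1 : ℝ) ^ (∑ i, (y i).val))
  linear_combination u * hp - w * hq

lemma parity_eigen (m : ℕ) :
    cubeAdj m *ᵥ (fun x => (-1 : ℝ) ^ (∑ i, (x i).val))
      = (-(m : ℝ)) • (fun x => (-1 : ℝ) ^ (∑ i, (x i).val)) := by
  funext x
  simp only [Matrix.mulVec, dotProduct, Pi.smul_apply, smul_eq_mul]
  have hterm : ∀ y, cubeAdj m x y * ((-1 : ℝ) ^ (∑ i, (y i).val))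
      = cubeAdj m x y * (-((-1 : ℝ) ^ (∑ i, (x i).val))) := by
    intro y
    unfold cubeAdj
    split
    · next h => rw [parity_neighbor m x y h]
    · simp
  rw [Finset.sum_congr rfl fun y _ => hterm y, ← Finset.sum_mul, cubeAdj_rowsum]
  ring

lemma dot_self_pos {V : Type} [Fintype V] {v : V → ℝ} (hv : v ≠ 0) : 0 < v ⬝ᵥ v := by
  have hne : v ⬝ᵥ v ≠ 0 := fun h => hv (dotProduct_self_eq_zero.mp h)
  have hnn : 0 ≤ v ⬝ᵥ v := Finset.sum_nonneg fun i _ => mul_self_nonneg _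
  exact lt_of_le_of_ne hnn (Ne.symm hne)


/-- For the hypercube `Q_m` (`m ≥ 3`, so `n = 2^m > 4` vertices): `Δ(s)` is positive
definite for `|s| > 1` or `|s| < 1/(m−1)`, and for `1/(m−1) < |s| < 1` there is `v`
with `vᵀ Δ(s) v < 0`. -/
theorem hypercube_defLap_stability (m : ℕ) (hm : 3 ≤ m) (s : ℝ) :
    ((1 < |s| ∨ |s| < 1 / ((m : ℝ) - 1)) → (defLap (cubeAdj m) s).PosDef) ∧
    (1 / ((m : ℝ) - 1) < |s| → |s| < 1 →
      ∃ v : (Fin m → ZMod 2) → ℝ, v ⬝ᵥ (defLap (cubeAdj m) s *ᵥ v) < 0) := by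
  have hm3 : (3 : ℝ) ≤ (m : ℝ) := by exact_mod_cast hm
  have hden : (0 : ℝ) < (m : ℝ) - 1 := by linarith
  constructor
  · intro hs
    refine Matrix.PosDef.of_dotProduct_mulVec_pos (defLap_herm_s15 m s) fun v hv => ?_
    have hN : 0 < v ⬝ᵥ v := dot_self_pos hv
    have hq := quad_eq m s v
    have hb := quad_bound m v
    have hsT : s * (v ⬝ᵥ (cubeAdj m *ᵥ v)) ≤ |s| * ((m : ℝ) * (v ⬝ᵥ v)) := by
      calc s * (v ⬝ᵥ (cubeAdj m *ᵥ v)) ≤ |s * (v ⬝ᵥ (cubeAdj m *ᵥ v))| := le_abs_self _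
        _ = |s| * |v ⬝ᵥ (cubeAdj m *ᵥ v)| := abs_mul _ _
        _ ≤ |s| * ((m : ℝ) * (v ⬝ᵥ v)) := by
            exact mul_le_mul_of_nonneg_left hb (abs_nonneg s)
    have hgoal : 0 < v ⬝ᵥ (defLap (cubeAdj m) s *ᵥ v) := by
      rw [hq, ← sq_abs s]
      rcases hs with h1 | h2
      · have f2 : 0 < |s| - 1 := by linarith
        have f1 : 0 < ((m : ℝ) - 1) * |s| - 1 := by
          nlinarith [mul_pos (show (0:ℝ) < (m : ℝ) - 1 by linarith) f2]
        nlinarith [mul_pos (mul_pos f1 f2) hN, hsT]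
      · have h2' : |s| * ((m : ℝ) - 1) < 1 := (lt_div_iff₀ hden).mp h2
        have f1 : ((m : ℝ) - 1) * |s| - 1 < 0 := by nlinarith
        have f2 : |s| - 1 < 0 := by
          nlinarith [mul_nonneg (show (0:ℝ) ≤ (m : ℝ) - 3 by linarith) (abs_nonneg s)]
        nlinarith [mul_pos (mul_pos_of_neg_of_neg f1 f2) hN, hsT]
    simpa using hgoal
  · intro h1 h2
    have hs0 : s ≠ 0 := by
      intro h
      rw [h, abs_zero] at h1
      have : 0 < 1 / ((m : ℝ) - 1) := by positivity
      linarith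
    have habs : 1 < |s| * ((m : ℝ) - 1) := (div_lt_iff₀ hden).mp h1
    rcases hs0.lt_or_gt with hneg | hpos
    · -- s < 0 : parity vector
      refine ⟨fun x => (-1 : ℝ) ^ (∑ i, (x i).val), ?_⟩
      set v : (Fin m → ZMod 2) → ℝ := fun x => (-1 : ℝ) ^ (∑ i, (x i).val) with hvdef
      have hN : 0 < v ⬝ᵥ v := by
        apply dot_self_pos
        intro h
        have := congrFun h (fun _ => 0)
        simp [hvdef, ZMod.val_zero] at this
      have hT : v ⬝ᵥ (cubeAdj m *ᵥ v) = -(m : ℝ) * (v ⬝ᵥ v) := by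
        rw [parity_eigen, dotProduct_smul, smul_eq_mul]
      rw [quad_eq, hT]
      have habs' : |s| = -s := abs_of_neg hneg
      rw [habs'] at habs h2
      have f1 : 0 < ((m : ℝ) - 1) * (-s) - 1 := by nlinarith
      have f2 : -s - 1 < 0 := by linarith
      nlinarith [mul_neg_of_neg_of_pos (mul_neg_of_pos_of_neg f1 f2) hN]
    · -- 0 < s : all-ones vector
      refine ⟨fun _ => (1 : ℝ), ?_⟩
      set v : (Fin m → ZMod 2) → ℝ := fun _ => (1 : ℝ) with hvdef
      have hN : 0 < v ⬝ᵥ v := by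
        apply dot_self_pos
        intro h
        have := congrFun h (fun _ => 0)
        simp [hvdef] at this
      have hT : v ⬝ᵥ (cubeAdj m *ᵥ v) = (m : ℝ) * (v ⬝ᵥ v) := by
        rw [hvdef, ones_eigen, dotProduct_smul, smul_eq_mul]
      rw [quad_eq, hT]
      have habs' : |s| = s := abs_of_pos hpos
      rw [habs'] at habs h2
      have f1 : 0 < ((m : ℝ) - 1) * s - 1 := by nlinarith
      have f2 : s - 1 < 0 := by linarith
      nlinarith [mul_neg_of_neg_of_pos (mul_neg_of_pos_of_neg f1 f2) hN]
end
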